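/- arXiv:2106.14629 — 16 statements merged into one kernel-verified Lean document; each statement's English description precedes it below -/
import Mathlib

section
/- Let ν, k, b₀, b₁, b₂ be real constants and set P(t) := b₀ + b₁t + b₂t². Assume P(t) > 0 for all t. Let q : ℝ → EuclideanSpace ℝ (Fin 3) be twice differentiable with r(t) := ‖q(t)‖ > 0, satisfying q''(t) = −ν·ω(t)·r(t)^(−(ν+2))·q(t) where ω(t) = k·P(t)^((ν−2)/2). Then the quantity J_ν(t) := P(t)·[ ‖q'(t)‖²/2 − k·P(t)^((ν−2)/2)/r(t)^ν ] − ((b₁ + 2b₂t)/2)·⟨q(t), q'(t)⟩ + (b₂/2)·r(t)² is constant in t. -/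
open scoped RealInnerProductSpace

/-- For the time-dependent generalized Kepler potential with
`ω(t) = k (b₀ + b₁ t + b₂ t²)^((ν-2)/2)`, the quantity `J_ν` is a first integral. -/
theorem Jnu_first_integral (ν k b₀ b₁ b₂ : ℝ)
    (P : ℝ → ℝ) (hP : ∀ t, P t = b₀ + b₁ * t + b₂ * t ^ 2)
    (hPpos : ∀ t, 0 < P t)
    (q q' q'' : ℝ → EuclideanSpace ℝ (Fin 3))
    (hq : ∀ t, HasDerivAt q (q' t) t)
    (hq' : ∀ t, HasDerivAt q' (q'' t) t)
    (hr : ∀ t, 0 < ‖q t‖)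
    (heom : ∀ t, q'' t =
      (-(ν * (k * P t ^ ((ν - 2) / 2)) * ‖q t‖ ^ (-(ν + 2)))) • q t) :
    ∀ t₁ t₂,
      P t₁ * (‖q' t₁‖ ^ 2 / 2 - k * P t₁ ^ ((ν - 2) / 2) / ‖q t₁‖ ^ ν)
        - (b₁ + 2 * b₂ * t₁) / 2 * ⟪q t₁, q' t₁⟫ + b₂ / 2 * ‖q t₁‖ ^ 2
      = P t₂ * (‖q' t₂‖ ^ 2 / 2 - k * P t₂ ^ ((ν - 2) / 2) / ‖q t₂‖ ^ ν)
        - (b₁ + 2 * b₂ * t₂) / 2 * ⟪q t₂, q' t₂⟫ + b₂ / 2 * ‖q t₂‖ ^ 2 := by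
  have hq0 : ∀ s, q s ≠ 0 := fun s => norm_pos_iff.mp (hr s)
  have hU : ∀ s, (0:ℝ) < ⟪q s, q s⟫ := fun s => by
    rw [real_inner_self_eq_norm_sq]; exact pow_pos (hr s) 2
  have hJg : ∀ s,
      P s * (‖q' s‖ ^ 2 / 2 - k * P s ^ ((ν - 2) / 2) / ‖q s‖ ^ ν)
        - (b₁ + 2 * b₂ * s) / 2 * ⟪q s, q' s⟫ + b₂ / 2 * ‖q s‖ ^ 2
      = P s * (⟪q' s, q' s⟫ / 2 - k * (P s ^ ((ν - 2) / 2) * ⟪q s, q s⟫ ^ (-(ν/2))))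
        - (b₁ + 2 * b₂ * s) / 2 * ⟪q s, q' s⟫ + b₂ / 2 * ⟪q s, q s⟫ := by
    intro s
    have h2 : (⟪q s, q s⟫ : ℝ) ^ (-(ν/2)) = (‖q s‖ ^ ν)⁻¹ := by
      rw [real_inner_self_eq_norm_sq, ← Real.rpow_natCast (‖q s‖) 2,
        ← Real.rpow_mul (norm_nonneg _), ← Real.rpow_neg (norm_nonneg _)]
      congr 1
      push_cast; ring
    rw [h2, real_inner_self_eq_norm_sq (q s), real_inner_self_eq_norm_sq (q' s)]
    ring
  have key : ∀ t, HasDerivAt (fun s =>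
      P s * (‖q' s‖ ^ 2 / 2 - k * P s ^ ((ν - 2) / 2) / ‖q s‖ ^ ν)
        - (b₁ + 2 * b₂ * s) / 2 * ⟪q s, q' s⟫ + b₂ / 2 * ‖q s‖ ^ 2) 0 t := by
    intro t
    have hPd : HasDerivAt P (b₁ + 2 * b₂ * t) t := by
      have h : HasDerivAt (fun s : ℝ => b₀ + b₁ * s + b₂ * s ^ 2)
          (b₁ + 2 * b₂ * t) t := by
        have h1 := (hasDerivAt_id t).const_mul b₁
        have h2 := (hasDerivAt_pow 2 t).const_mul b₂
        have := ((hasDerivAt_const t b₀).add h1).add h2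
        refine this.congr_deriv ?_
        simp; ring
      exact h.congr_of_eventuallyEq (Filter.Eventually.of_forall fun s => hP s)
    have h1 : HasDerivAt (fun s => (⟪q' s, q' s⟫:ℝ) / 2)
        ((⟪q' t, q'' t⟫ + ⟪q'' t, q' t⟫) / 2) t :=
      ((hq' t).inner ℝ (hq' t)).div_const 2
    have h2 : HasDerivAt (fun s => P s ^ ((ν - 2) / 2))
        ((b₁ + 2 * b₂ * t) * ((ν - 2) / 2) * P t ^ ((ν - 2) / 2 - 1)) t :=
      hPd.rpow_const (Or.inl (hPpos t).ne')
    have h3 : HasDerivAt (fun s => (⟪q s, q s⟫:ℝ))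
        (⟪q t, q' t⟫ + ⟪q' t, q t⟫) t := (hq t).inner ℝ (hq t)
    have h4 : HasDerivAt (fun s => (⟪q s, q s⟫:ℝ) ^ (-(ν/2)))
        ((⟪q t, q' t⟫ + ⟪q' t, q t⟫) * (-(ν/2)) * ⟪q t, q t⟫ ^ (-(ν/2) - 1)) t :=
      h3.rpow_const (Or.inl (hU t).ne')
    have h9 : HasDerivAt (fun s : ℝ => (b₁ + 2 * b₂ * s) / 2) b₂ t := by
      have := ((hasDerivAt_id t).const_mul (2 * b₂)).const_add b₁
      have h := this.div_const 2
      refine h.congr_deriv ?_; ring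
    have h10 : HasDerivAt (fun s => (⟪q s, q' s⟫:ℝ))
        (⟪q t, q'' t⟫ + ⟪q' t, q' t⟫) t := (hq t).inner ℝ (hq' t)
    have hg := ((hPd.mul (h1.sub ((h2.mul h4).const_mul k))).sub
        (h9.mul h10)).add (h3.const_mul (b₂ / 2))
    have hG : HasDerivAt (fun s =>
        P s * (⟪q' s, q' s⟫ / 2 - k * (P s ^ ((ν - 2) / 2) * ⟪q s, q s⟫ ^ (-(ν/2))))
          - (b₁ + 2 * b₂ * s) / 2 * ⟪q s, q' s⟫ + b₂ / 2 * ⟪q s, q s⟫) 0 t := by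
      refine hg.congr_deriv ?_; simp only [Pi.sub_apply, Pi.mul_apply]
      have e1 : P t ^ ((ν - 2) / 2) = P t ^ ((ν - 2) / 2 - 1) * P t := by
        rw [← Real.rpow_add_one (hPpos t).ne']
        congr 1; ring
      have e2 : (⟪q t, q t⟫:ℝ) ^ (-(ν/2)) = ⟪q t, q t⟫ ^ (-(ν/2) - 1) * ⟪q t, q t⟫ := by
        rw [← Real.rpow_add_one (hU t).ne']
        congr 1; ring
      have e3 : ‖q t‖ ^ (-(ν + 2)) = (⟪q t, q t⟫:ℝ) ^ (-(ν/2) - 1) := by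
        rw [real_inner_self_eq_norm_sq, ← Real.rpow_natCast (‖q t‖) 2,
          ← Real.rpow_mul (norm_nonneg _)]
        congr 1
        push_cast; ring
      rw [heom t, real_inner_smul_right, real_inner_smul_right, real_inner_smul_left,
        real_inner_comm (q' t) (q t), e3, e1, e2]
      ring
    exact hG.congr_of_eventuallyEq (Filter.Eventually.of_forall fun s => hJg s)
  intro t₁ t₂
  exact is_const_of_deriv_eq_zero (fun t => (key t).differentiableAt)
    (fun t => (key t).deriv) t₁ t₂
end

section
/- Let k, b₀, b₁ be real constants with k·b₁ ≠ 0, and assume b₀ + b₁t > 0 for all t in an open interval J. Let q : J → EuclideanSpace ℝ (Fin 3) be twice differentiable with r(t) := ‖q(t)‖ > 0 on J, satisfying the time-dependent Kepler equations q''(t) = −ω(t)·r(t)^(−3)·q(t) with ω(t) = k/(b₀ + b₁t). Then the quantity E₂(t) := (b₀ + b₁t)²·[ ‖q'(t)‖²/2 − k/(r(t)(b₀ + b₁t)) ] − b₁(b₀ + b₁t)·⟨q(t), q'(t)⟩ + (b₁²/2)·r(t)² is constant on J. -/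
open scoped RealInnerProductSpace

/-- For the time-dependent Kepler potential with `ω(t) = k/(b₀ + b₁ t)`,
the quantity `E₂` is a first integral on the open interval `J = (a, b)`. -/
theorem E2_first_integral (k b₀ b₁ : ℝ) (hk : k * b₁ ≠ 0) (a b : ℝ)
    (hpos : ∀ t ∈ Set.Ioo a b, 0 < b₀ + b₁ * t)
    (q q' q'' : ℝ → EuclideanSpace ℝ (Fin 3))
    (hq : ∀ t ∈ Set.Ioo a b, HasDerivAt q (q' t) t)
    (hq' : ∀ t ∈ Set.Ioo a b, HasDerivAt q' (q'' t) t)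
    (hr : ∀ t ∈ Set.Ioo a b, 0 < ‖q t‖)
    (heom : ∀ t ∈ Set.Ioo a b,
      q'' t = (-(k / (b₀ + b₁ * t) * ‖q t‖ ^ (-3 : ℝ))) • q t) :
    ∀ t₁ ∈ Set.Ioo a b, ∀ t₂ ∈ Set.Ioo a b,
      (b₀ + b₁ * t₁) ^ 2 * (‖q' t₁‖ ^ 2 / 2 - k / (‖q t₁‖ * (b₀ + b₁ * t₁)))
        - b₁ * (b₀ + b₁ * t₁) * ⟪q t₁, q' t₁⟫ + b₁ ^ 2 / 2 * ‖q t₁‖ ^ 2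
      = (b₀ + b₁ * t₂) ^ 2 * (‖q' t₂‖ ^ 2 / 2 - k / (‖q t₂‖ * (b₀ + b₁ * t₂)))
        - b₁ * (b₀ + b₁ * t₂) * ⟪q t₂, q' t₂⟫ + b₁ ^ 2 / 2 * ‖q t₂‖ ^ 2 := by
  -- The conserved quantity, written via inner products so it is easy to differentiate.
  set E : ℝ → ℝ := fun t =>
      (b₀ + b₁ * t) ^ 2 * (⟪q' t, q' t⟫ / 2)
      - k * (b₀ + b₁ * t) * (Real.sqrt ⟪q t, q t⟫)⁻¹
      - b₁ * (b₀ + b₁ * t) * ⟪q t, q' t⟫ + b₁ ^ 2 / 2 * ⟪q t, q t⟫ with hEdef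
  -- E has zero derivative on the interval.
  have hEderiv : ∀ t ∈ Set.Ioo a b, HasDerivAt E 0 t := by
    intro t ht
    have hP : 0 < b₀ + b₁ * t := hpos t ht
    have hrt : 0 < ‖q t‖ := hr t ht
    have hqt := hq t ht
    have hq't := hq' t ht
    have hsq : ⟪q t, q t⟫ = ‖q t‖ ^ 2 := real_inner_self_eq_norm_sq (q t)
    have hsqrt_eq : Real.sqrt ⟪q t, q t⟫ = ‖q t‖ := by
      rw [hsq, Real.sqrt_sq (norm_nonneg _)]
    have hs_ne : ⟪q t, q t⟫ ≠ 0 := by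
      rw [hsq]; positivity
    have hsqrt_ne : Real.sqrt ⟪q t, q t⟫ ≠ 0 := by
      rw [hsqrt_eq]; exact ne_of_gt hrt
    have hPd : HasDerivAt (fun t => b₀ + b₁ * t) b₁ t := by
      simpa using ((hasDerivAt_id t).const_mul b₁).const_add b₀
    have h1 : HasDerivAt (fun t => ⟪q' t, q' t⟫)
        (⟪q' t, q'' t⟫ + ⟪q'' t, q' t⟫) t := hq't.inner ℝ hq't
    have h2 : HasDerivAt (fun t => ⟪q t, q t⟫)
        (⟪q t, q' t⟫ + ⟪q' t, q t⟫) t := hqt.inner ℝ hqt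
    have h3 : HasDerivAt (fun t => ⟪q t, q' t⟫)
        (⟪q t, q'' t⟫ + ⟪q' t, q' t⟫) t := hqt.inner ℝ hq't
    have hsqrtd : HasDerivAt (fun t => Real.sqrt ⟪q t, q t⟫)
        ((1 / (2 * Real.sqrt ⟪q t, q t⟫)) * (⟪q t, q' t⟫ + ⟪q' t, q t⟫)) t :=
      (Real.hasDerivAt_sqrt hs_ne).comp t h2
    have hinvd : HasDerivAt (fun t => (Real.sqrt ⟪q t, q t⟫)⁻¹)
        (-((1 / (2 * Real.sqrt ⟪q t, q t⟫)) * (⟪q t, q' t⟫ + ⟪q' t, q t⟫))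
          / (Real.sqrt ⟪q t, q t⟫) ^ 2) t := hsqrtd.inv hsqrt_ne
    have hED : HasDerivAt E
        ((b₁ * (b₀ + b₁ * t) * 2) * (⟪q' t, q' t⟫ / 2)
          + (b₀ + b₁ * t) ^ 2 * ((⟪q' t, q'' t⟫ + ⟪q'' t, q' t⟫) / 2)
          - (k * b₁ * (Real.sqrt ⟪q t, q t⟫)⁻¹
            + k * (b₀ + b₁ * t) *
              (-((1 / (2 * Real.sqrt ⟪q t, q t⟫)) * (⟪q t, q' t⟫ + ⟪q' t, q t⟫))
                / (Real.sqrt ⟪q t, q t⟫) ^ 2))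
          - (b₁ * b₁ * ⟪q t, q' t⟫
            + b₁ * (b₀ + b₁ * t) * (⟪q t, q'' t⟫ + ⟪q' t, q' t⟫))
          + b₁ ^ 2 / 2 * (⟪q t, q' t⟫ + ⟪q' t, q t⟫)) t := by
      have hP2 : HasDerivAt (fun t => (b₀ + b₁ * t) ^ 2) (b₁ * (b₀ + b₁ * t) * 2) t := by
        have := hPd.fun_pow 2
        simpa [mul_comm, mul_assoc, mul_left_comm] using this
      exact ((((hP2.mul (h1.div_const 2)).sub
          (((hPd.const_mul k).mul hinvd).congr_deriv (by ring))).sub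
          (((hPd.const_mul b₁).mul h3).congr_deriv (by ring))).add
          ((h2.const_mul (b₁ ^ 2 / 2))))
    -- Now show the derivative is zero using the equation of motion.
    have hrw : ‖q t‖ ^ (-3 : ℝ) = (‖q t‖ ^ 3)⁻¹ := by
      rw [Real.rpow_neg (norm_nonneg _)]
      norm_num
    have hq''i : ∀ x : EuclideanSpace ℝ (Fin 3),
        ⟪x, q'' t⟫ = -(k / (b₀ + b₁ * t) * (‖q t‖ ^ 3)⁻¹) * ⟪x, q t⟫ := by
      intro x
      rw [heom t ht, hrw, real_inner_smul_right]
    have hq''i' : ⟪q'' t, q' t⟫ = -(k / (b₀ + b₁ * t) * (‖q t‖ ^ 3)⁻¹) * ⟪q t, q' t⟫ := by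
      rw [heom t ht, hrw, real_inner_smul_left, real_inner_comm]
    convert hED using 1
    rw [hq''i (q' t), hq''i (q t), hq''i', hsqrt_eq, hsq, real_inner_comm (q' t) (q t)]
    have hPne : (b₀ + b₁ * t) ≠ 0 := ne_of_gt hP
    have hrne : ‖q t‖ ≠ 0 := ne_of_gt hrt
    field_simp
    ring
  -- Constancy of E on the interval via the mean value theorem.
  have hconst : ∀ t₁ ∈ Set.Ioo a b, ∀ t₂ ∈ Set.Ioo a b, t₁ < t₂ → E t₁ = E t₂ := by
    intro t₁ ht₁ t₂ ht₂ hlt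
    have hsub : Set.Icc t₁ t₂ ⊆ Set.Ioo a b := fun x hx =>
      ⟨lt_of_lt_of_le ht₁.1 hx.1, lt_of_le_of_lt hx.2 ht₂.2⟩
    have hcont : ContinuousOn E (Set.Icc t₁ t₂) := fun x hx =>
      ((hEderiv x (hsub hx)).continuousAt).continuousWithinAt
    obtain ⟨c, hc, hceq⟩ := exists_hasDerivAt_eq_slope E (fun _ => (0 : ℝ)) hlt hcont
      (fun x hx => hEderiv x (hsub ⟨le_of_lt hx.1, le_of_lt hx.2⟩))
    have : E t₂ - E t₁ = 0 := by
      have h := hceq.symm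
      rwa [div_eq_zero_iff, or_iff_left (sub_ne_zero.mpr (ne_of_gt hlt))] at h
    linarith
  have hconst' : ∀ t₁ ∈ Set.Ioo a b, ∀ t₂ ∈ Set.Ioo a b, E t₁ = E t₂ := by
    intro t₁ ht₁ t₂ ht₂
    rcases lt_trichotomy t₁ t₂ with h | h | h
    · exact hconst t₁ ht₁ t₂ ht₂ h
    · rw [h]
    · exact (hconst t₂ ht₂ t₁ ht₁ h).symm
  -- Relate E to the expression in the statement.
  have hEeq : ∀ t ∈ Set.Ioo a b,
      (b₀ + b₁ * t) ^ 2 * (‖q' t‖ ^ 2 / 2 - k / (‖q t‖ * (b₀ + b₁ * t)))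
        - b₁ * (b₀ + b₁ * t) * ⟪q t, q' t⟫ + b₁ ^ 2 / 2 * ‖q t‖ ^ 2 = E t := by
    intro t ht
    have hP : 0 < b₀ + b₁ * t := hpos t ht
    have hrt : 0 < ‖q t‖ := hr t ht
    have hsq : ⟪q t, q t⟫ = ‖q t‖ ^ 2 := real_inner_self_eq_norm_sq (q t)
    have hsq' : ⟪q' t, q' t⟫ = ‖q' t‖ ^ 2 := real_inner_self_eq_norm_sq (q' t)
    have hsqrt_eq : Real.sqrt ⟪q t, q t⟫ = ‖q t‖ := by
      rw [hsq, Real.sqrt_sq (norm_nonneg _)]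
    rw [hEdef]
    simp only [hsq, hsq', hsqrt_eq, Real.sqrt_sq (norm_nonneg (q t))]
    have hPne : (b₀ + b₁ * t) ≠ 0 := ne_of_gt hP
    have hrne : ‖q t‖ ≠ 0 := ne_of_gt hrt
    field_simp
  intro t₁ ht₁ t₂ ht₂
  rw [hEeq t₁ ht₁, hEeq t₂ ht₂, hconst' t₁ ht₁ t₂ ht₂]
end

section
/- Let k, b₀, b₁ be real constants with k·b₁ ≠ 0, and assume b₀ + b₁t > 0 for all t in an open interval J. Let q : J → EuclideanSpace ℝ (Fin 3) be twice differentiable with r(t) := ‖q(t)‖ > 0 on J, satisfying q''(t) = −ω(t)·r(t)^(−3)·q(t) with ω(t) = k/(b₀ + b₁t). Define the generalized Runge–Lenz vector A(t) := (b₀ + b₁t)·[ ‖q'(t)‖²·q(t) − ⟨q(t), q'(t)⟩·q'(t) − (k/(r(t)(b₀ + b₁t)))·q(t) ] − b₁·( q(t) × (q(t) × q'(t)) ). Then A(t) is constant on J. -/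
open scoped RealInnerProductSpace

/-- The cross product on `EuclideanSpace ℝ (Fin 3)`. -/
noncomputable def cross3 (u v : EuclideanSpace ℝ (Fin 3)) : EuclideanSpace ℝ (Fin 3) :=
  WithLp.toLp 2 (fun i => u (i + 1) * v (i + 2) - u (i + 2) * v (i + 1))

lemma cross3_cross3_apply (u v : EuclideanSpace ℝ (Fin 3)) (i : Fin 3) :
    cross3 u (cross3 u v) i
    = u (i + 1) * (u i * v (i + 1) - u (i + 1) * v i)
      - u (i + 2) * (u (i + 2) * v i - u i * v (i + 2)) := by
  fin_cases i <;> simp [cross3]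

/-- Derivative of one component of the simplified Runge–Lenz vector is zero. -/
lemma rl_comp_deriv (k b₀ b₁ c t : ℝ) (q q' q'' : ℝ → EuclideanSpace ℝ (Fin 3))
    (i i₁ i₂ : Fin 3)
    (hQ : ∀ j, HasDerivAt (fun s => q s j) (q' t j) t)
    (hQ' : ∀ j, HasDerivAt (fun s => q' s j) (q'' t j) t)
    (hNd : HasDerivAt (fun s => ‖q s‖) ((⟪q t, q' t⟫ : ℝ) / ‖q t‖) t)
    (hSd : HasDerivAt (fun s => ‖q' s‖ ^ 2) (2 * (c * ⟪q t, q' t⟫)) t)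
    (hPd : HasDerivAt (fun s => (⟪q s, q' s⟫ : ℝ)) (‖q' t‖ ^ 2 + c * ‖q t‖ ^ 2) t)
    (hN : ‖q t‖ ≠ 0)
    (hcj : ∀ j, q'' t j = c * q t j)
    (hk : k = -(c * (b₀ + b₁ * t) * ‖q t‖ ^ 3))
    (hS : ‖q' t‖ ^ 2 = q' t i ^ 2 + q' t i₁ ^ 2 + q' t i₂ ^ 2)
    (hP : (⟪q t, q' t⟫ : ℝ) = q t i * q' t i + q t i₁ * q' t i₁ + q t i₂ * q' t i₂) :
    HasDerivAt (fun s => (b₀ + b₁ * s) * (‖q' s‖ ^ 2 * q s i - ⟪q s, q' s⟫ * q' s i)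
      - k / ‖q s‖ * q s i
      - b₁ * (q s i₁ * (q s i * q' s i₁ - q s i₁ * q' s i)
            - q s i₂ * (q s i₂ * q' s i - q s i * q' s i₂))) 0 t := by
  have hβd : HasDerivAt (fun s => b₀ + b₁ * s) b₁ t := by
    simpa using ((hasDerivAt_id t).const_mul b₁).const_add b₀
  have H := ((hβd.mul ((hSd.mul (hQ i)).sub (hPd.mul (hQ' i)))).sub
      (((hasDerivAt_const t k).div hNd hN).mul (hQ i))).sub
      (HasDerivAt.const_mul b₁
        (((hQ i₁).mul (((hQ i).mul (hQ' i₁)).sub ((hQ i₁).mul (hQ' i)))).sub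
          ((hQ i₂).mul (((hQ i₂).mul (hQ' i)).sub ((hQ i).mul (hQ' i₂))))))
  refine H.congr_deriv ?_
  simp only [hcj, hk, hS, hP, Pi.mul_apply, Pi.sub_apply, Pi.div_apply]
  field_simp
  ring

/-- For the time-dependent Kepler potential with `ω(t) = k/(b₀ + b₁ t)`, the generalized
Runge–Lenz vector `A` is a first integral on the open interval `J = (a, b)`. -/
theorem generalized_RungeLenz_conserved (k b₀ b₁ : ℝ) (hk : k * b₁ ≠ 0) (a b : ℝ)
    (hpos : ∀ t ∈ Set.Ioo a b, 0 < b₀ + b₁ * t)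
    (q q' q'' : ℝ → EuclideanSpace ℝ (Fin 3))
    (hq : ∀ t ∈ Set.Ioo a b, HasDerivAt q (q' t) t)
    (hq' : ∀ t ∈ Set.Ioo a b, HasDerivAt q' (q'' t) t)
    (hr : ∀ t ∈ Set.Ioo a b, 0 < ‖q t‖)
    (heom : ∀ t ∈ Set.Ioo a b,
      q'' t = (-(k / (b₀ + b₁ * t) * ‖q t‖ ^ (-3 : ℝ))) • q t)
    (A : ℝ → EuclideanSpace ℝ (Fin 3))
    (hA : ∀ t, A t =
      (b₀ + b₁ * t) • (‖q' t‖ ^ 2 • q t - (⟪q t, q' t⟫ : ℝ) • q' t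
        - (k / (‖q t‖ * (b₀ + b₁ * t))) • q t)
      - b₁ • cross3 (q t) (cross3 (q t) (q' t))) :
    ∀ t₁ ∈ Set.Ioo a b, ∀ t₂ ∈ Set.Ioo a b, A t₁ = A t₂ := by
  have key : ∀ t ∈ Set.Ioo a b,
      HasDerivWithinAt A (0 : EuclideanSpace ℝ (Fin 3)) (Set.Ioo a b) t := by
    intro t ht
    have hβpos := hpos t ht
    have hNpos := hr t ht
    have hN : ‖q t‖ ≠ 0 := ne_of_gt hNpos
    have hβ : b₀ + b₁ * t ≠ 0 := ne_of_gt hβpos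
    set c : ℝ := -(k / (b₀ + b₁ * t) * ‖q t‖ ^ (-3 : ℝ)) with hc
    have heomc : q'' t = c • q t := heom t ht
    have hcj : ∀ j, q'' t j = c * q t j := fun j => by rw [heomc]; rfl
    have hkc : k = -(c * (b₀ + b₁ * t) * ‖q t‖ ^ 3) := by
      rw [hc, Real.rpow_neg hNpos.le, show ((3:ℝ)) = ((3:ℕ):ℝ) by norm_num,
        Real.rpow_natCast]
      field_simp
    have hQ : ∀ j, HasDerivAt (fun s => q s j) (q' t j) t := fun j =>
      (EuclideanSpace.proj (𝕜 := ℝ) j).hasFDerivAt.comp_hasDerivAt t (hq t ht)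
    have hQ' : ∀ j, HasDerivAt (fun s => q' s j) (q'' t j) t := fun j =>
      (EuclideanSpace.proj (𝕜 := ℝ) j).hasFDerivAt.comp_hasDerivAt t (hq' t ht)
    have hPd : HasDerivAt (fun s => (⟪q s, q' s⟫ : ℝ))
        (‖q' t‖ ^ 2 + c * ‖q t‖ ^ 2) t := by
      have h1 := (hq t ht).inner (𝕜 := ℝ) (hq' t ht)
      refine h1.congr_deriv ?_
      rw [heomc, real_inner_smul_right, real_inner_self_eq_norm_sq,
        real_inner_self_eq_norm_sq]
      ring
    have hSd : HasDerivAt (fun s => ‖q' s‖ ^ 2) (2 * (c * ⟪q t, q' t⟫)) t := by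
      have h1 := (hq' t ht).inner (𝕜 := ℝ) (hq' t ht)
      have h2 : (fun s => (⟪q' s, q' s⟫ : ℝ)) = fun s => ‖q' s‖ ^ 2 :=
        funext fun s => real_inner_self_eq_norm_sq _
      rw [h2] at h1
      refine h1.congr_deriv ?_
      rw [heomc, real_inner_smul_right, real_inner_smul_left,
        real_inner_comm (q t) (q' t)]
      ring
    have hNd : HasDerivAt (fun s => ‖q s‖) ((⟪q t, q' t⟫ : ℝ) / ‖q t‖) t := by
      have hinn : (⟪q t, q t⟫ : ℝ) ≠ 0 := by
        rw [real_inner_self_eq_norm_sq]; positivity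
      have h1 := (hq t ht).inner (𝕜 := ℝ) (hq t ht)
      have h2 := (Real.hasDerivAt_sqrt hinn).comp t h1
      simp only [Function.comp_def] at h2
      have h3 : (fun s => Real.sqrt (⟪q s, q s⟫ : ℝ)) = fun s => ‖q s‖ :=
        funext fun s => by rw [real_inner_self_eq_norm_sq, Real.sqrt_sq (norm_nonneg _)]
      rw [h3] at h2
      refine h2.congr_deriv ?_
      rw [real_inner_self_eq_norm_sq, Real.sqrt_sq (norm_nonneg _),
        real_inner_comm (q' t) (q t)]
      field_simp
      ring
    set G : ℝ → EuclideanSpace ℝ (Fin 3) := fun s => WithLp.toLp 2 fun i =>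
      (b₀ + b₁ * s) * (‖q' s‖ ^ 2 * q s i - ⟪q s, q' s⟫ * q' s i)
      - k / ‖q s‖ * q s i
      - b₁ * (q s (i + 1) * (q s i * q' s (i + 1) - q s (i + 1) * q' s i)
            - q s (i + 2) * (q s (i + 2) * q' s i - q s i * q' s (i + 2))) with hGdef
    have hGpi : ∀ i : Fin 3, HasDerivAt (fun s => G s i) 0 t := by
      intro i
      have e1 : ‖q' t‖ ^ 2 = q' t i ^ 2 + q' t (i + 1) ^ 2 + q' t (i + 2) ^ 2 := by
        rw [EuclideanSpace.real_norm_sq_eq]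
        fin_cases i <;>
          simp [PiLp.inner_apply, Fin.sum_univ_three, RCLike.inner_apply, conj_trivial] <;>
          ring
      have e2 : (⟪q t, q' t⟫ : ℝ)
          = q t i * q' t i + q t (i + 1) * q' t (i + 1) + q t (i + 2) * q' t (i + 2) := by
        fin_cases i <;>
          simp [PiLp.inner_apply, Fin.sum_univ_three, RCLike.inner_apply, conj_trivial] <;>
          ring
      exact rl_comp_deriv k b₀ b₁ c t q q' q'' i (i + 1) (i + 2)
        hQ hQ' hNd hSd hPd hN hcj hkc e1 e2
    have hG : HasDerivAt G (0 : EuclideanSpace ℝ (Fin 3)) t := by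
      have hpi : HasDerivAt (fun s => (fun i => G s i : Fin 3 → ℝ))
          (fun _ => (0 : ℝ)) t := hasDerivAt_pi.2 hGpi
      have := ((EuclideanSpace.equiv (Fin 3) ℝ).symm.toContinuousLinearMap).hasFDerivAt.comp_hasDerivAt
        t hpi
      refine this.congr_deriv ?_
      simp
      rfl
    have hev : A =ᶠ[nhds t] G := by
      filter_upwards [Ioo_mem_nhds ht.1 ht.2] with s hs
      have hβs : b₀ + b₁ * s ≠ 0 := ne_of_gt (hpos s hs)
      have hNs : ‖q s‖ ≠ 0 := ne_of_gt (hr s hs)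
      rw [hA s]
      ext i
      show ((b₀ + b₁ * s) • (‖q' s‖ ^ 2 • q s - (⟪q s, q' s⟫ : ℝ) • q' s
        - (k / (‖q s‖ * (b₀ + b₁ * s))) • q s)
        - b₁ • cross3 (q s) (cross3 (q s) (q' s))) i = G s i
      simp only [hGdef, PiLp.smul_apply, PiLp.sub_apply, smul_eq_mul]
      rw [cross3_cross3_apply]
      field_simp
    exact (hG.congr_of_eventuallyEq hev).hasDerivWithinAt
  intro t₁ ht₁ t₂ ht₂
  have hle := Convex.norm_image_sub_le_of_norm_hasDerivWithin_le
    (f' := fun _ => (0 : EuclideanSpace ℝ (Fin 3))) (C := 0) key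
    (fun x _ => by simp) (convex_Ioo a b) ht₁ ht₂
  have : ‖A t₂ - A t₁‖ ≤ 0 := by simpa using hle
  have := le_antisymm this (norm_nonneg _)
  rw [norm_eq_zero, sub_eq_zero] at this
  exact this.symm
end

section
/- Let k, b₀, b₁, b₂ be real constants with k ≠ 0, and set P(t) := b₀ + b₁t + b₂t², assumed positive for all t in an open interval J. Let q : J → EuclideanSpace ℝ (Fin 3) be twice differentiable with r(t) := ‖q(t)‖ > 0 on J, satisfying q''(t) = −ω(t)·r(t)^(−3)·q(t) with ω(t) = k/√(P(t)). Then the quantity E₃(t) := P(t)·[ ‖q'(t)‖²/2 − k/(r(t)·√(P(t))) ] − ((b₁ + 2b₂t)/2)·⟨q(t), q'(t)⟩ + (b₂/2)·r(t)² is constant on J. -/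
open scoped RealInnerProductSpace

/-- For the time-dependent Kepler potential with `ω(t) = k/√(b₀ + b₁ t + b₂ t²)`,
the quantity `E₃` is a first integral on the open interval `J = (a, b)`. -/
theorem E3_first_integral (k b₀ b₁ b₂ : ℝ) (hk : k ≠ 0)
    (P : ℝ → ℝ) (hP : ∀ t, P t = b₀ + b₁ * t + b₂ * t ^ 2) (a b : ℝ)
    (hPpos : ∀ t ∈ Set.Ioo a b, 0 < P t)
    (q q' q'' : ℝ → EuclideanSpace ℝ (Fin 3))
    (hq : ∀ t ∈ Set.Ioo a b, HasDerivAt q (q' t) t)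
    (hq' : ∀ t ∈ Set.Ioo a b, HasDerivAt q' (q'' t) t)
    (hr : ∀ t ∈ Set.Ioo a b, 0 < ‖q t‖)
    (heom : ∀ t ∈ Set.Ioo a b,
      q'' t = (-(k / Real.sqrt (P t) * ‖q t‖ ^ (-3 : ℝ))) • q t) :
    ∀ t₁ ∈ Set.Ioo a b, ∀ t₂ ∈ Set.Ioo a b,
      P t₁ * (‖q' t₁‖ ^ 2 / 2 - k / (‖q t₁‖ * Real.sqrt (P t₁)))
        - (b₁ + 2 * b₂ * t₁) / 2 * ⟪q t₁, q' t₁⟫ + b₂ / 2 * ‖q t₁‖ ^ 2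
      = P t₂ * (‖q' t₂‖ ^ 2 / 2 - k / (‖q t₂‖ * Real.sqrt (P t₂)))
        - (b₁ + 2 * b₂ * t₂) / 2 * ⟪q t₂, q' t₂⟫ + b₂ / 2 * ‖q t₂‖ ^ 2 := by
  set E : ℝ → ℝ := fun s => P s * (⟪q' s, q' s⟫ / 2
      - k * (Real.sqrt ⟪q s, q s⟫ * Real.sqrt (P s))⁻¹)
      - (b₁ + 2 * b₂ * s) / 2 * ⟪q s, q' s⟫ + b₂ / 2 * ⟪q s, q s⟫ with hEdef
  have hE : ∀ s : ℝ, E s = P s * (‖q' s‖ ^ 2 / 2 - k / (‖q s‖ * Real.sqrt (P s)))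
      - (b₁ + 2 * b₂ * s) / 2 * ⟪q s, q' s⟫ + b₂ / 2 * ‖q s‖ ^ 2 := by
    intro s
    simp only [hEdef, real_inner_self_eq_norm_sq, Real.sqrt_sq (norm_nonneg _),
      div_eq_mul_inv]
  -- derivative of E is 0 on the interval
  have hd : ∀ t ∈ Set.Ioo a b, HasDerivAt E 0 t := by
    intro t ht
    have hPt : 0 < P t := hPpos t ht
    have hrt : 0 < ‖q t‖ := hr t ht
    have hut : (0:ℝ) < ⟪q t, q t⟫ := by
      rw [real_inner_self_eq_norm_sq]; positivity
    have hqd := hq t ht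
    have hq'd := hq' t ht
    have hPfun : P = fun s => b₀ + b₁ * s + b₂ * s ^ 2 := funext hP
    have hPd : HasDerivAt P (b₁ + 2 * b₂ * t) t := by
      rw [hPfun]
      have h1 : HasDerivAt (fun s : ℝ => b₀ + b₁ * s + b₂ * s ^ 2)
          (0 + b₁ * 1 + b₂ * (2 * t ^ 1)) t := by
        exact (((hasDerivAt_const t b₀).add ((hasDerivAt_id t).const_mul b₁)).add
          ((hasDerivAt_pow 2 t).const_mul b₂))
      convert h1 using 1; ring
    have hu' : HasDerivAt (fun s => ⟪q s, q s⟫) (2 * ⟪q t, q' t⟫) t := by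
      have h := hqd.inner ℝ hqd
      rw [real_inner_comm (q t) (q' t), ← two_mul] at h
      exact h
    have hw' : HasDerivAt (fun s => ⟪q s, q' s⟫) (⟪q t, q'' t⟫ + ⟪q' t, q' t⟫) t :=
      hqd.inner ℝ hq'd
    have hv' : HasDerivAt (fun s => ⟪q' s, q' s⟫) (2 * ⟪q' t, q'' t⟫) t := by
      have h := hq'd.inner ℝ hq'd
      rw [real_inner_comm (q' t) (q'' t), ← two_mul] at h
      exact h
    have hsu : HasDerivAt (fun s => Real.sqrt ⟪q s, q s⟫)
        ((2 * ⟪q t, q' t⟫) / (2 * Real.sqrt ⟪q t, q t⟫)) t := by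
      exact ((Real.hasDerivAt_sqrt hut.ne').comp t hu').congr_deriv (by ring)
    have hsP : HasDerivAt (fun s => Real.sqrt (P s))
        ((b₁ + 2 * b₂ * t) / (2 * Real.sqrt (P t))) t := by
      exact ((Real.hasDerivAt_sqrt hPt.ne').comp t hPd).congr_deriv (by ring)
    have hsupos : 0 < Real.sqrt ⟪q t, q t⟫ := Real.sqrt_pos.2 hut
    have hsPpos : 0 < Real.sqrt (P t) := Real.sqrt_pos.2 hPt
    have hne : Real.sqrt ⟪q t, q t⟫ * Real.sqrt (P t) ≠ 0 := by positivity
    have hprod := hsu.mul hsP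
    have hinv := (hprod.inv hne).const_mul k
    have hterm1 := hPd.mul ((hv'.div_const 2).sub hinv)
    have hc : HasDerivAt (fun s : ℝ => (b₁ + 2 * b₂ * s) / 2) b₂ t := by
      have : HasDerivAt (fun s : ℝ => (b₁ + 2 * b₂ * s) / 2) ((0 + 2 * b₂ * 1) / 2) t :=
        (((hasDerivAt_const t b₁).add ((hasDerivAt_id t).const_mul (2 * b₂)))).div_const 2
      simpa using this
    have hterm2 := hc.mul hw'
    have hterm3 := hu'.const_mul (b₂ / 2)
    have total := (hterm1.sub hterm2).add hterm3
    convert total using 1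
    case e'_4 => rfl
    case e'_5 => rfl
    case e'_8 => rfl
    simp only [Pi.mul_apply, Pi.sub_apply, Pi.inv_apply]
    -- show 0 equals the big derivative expression
    have hq''t := heom t ht
    have hnorm3 : ‖q t‖ ^ (-3 : ℝ) = (‖q t‖ ^ 3)⁻¹ := by
      rw [show (-3 : ℝ) = -(3 : ℕ) by norm_num, Real.rpow_neg (norm_nonneg _),
        Real.rpow_natCast]
    have hnormq : ‖q t‖ = Real.sqrt ⟪q t, q t⟫ := by
      rw [real_inner_self_eq_norm_sq, Real.sqrt_sq (norm_nonneg _)]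
    set c : ℝ := -(k / Real.sqrt (P t) * ‖q t‖ ^ (-3 : ℝ)) with hcdef
    have hiq : ⟪q t, q'' t⟫ = c * ⟪q t, q t⟫ := by
      rw [hq''t, real_inner_smul_right]
    have hiq' : ⟪q' t, q'' t⟫ = c * ⟪q t, q' t⟫ := by
      rw [hq''t, real_inner_smul_right, real_inner_comm]
    rw [hiq, hiq']
    have hcval : c = -(k / (Real.sqrt (P t) * (⟪q t, q t⟫ * Real.sqrt ⟪q t, q t⟫))) := by
      rw [hcdef, hnorm3, hnormq]
      have : Real.sqrt ⟪q t, q t⟫ ^ 3 = ⟪q t, q t⟫ * Real.sqrt ⟪q t, q t⟫ := by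
        rw [pow_succ, Real.sq_sqrt hut.le]
      rw [this, div_eq_mul_inv, div_eq_mul_inv, mul_assoc, ← mul_inv]
    rw [hcval]
    set su := Real.sqrt ⟪q t, q t⟫ with hsudef
    set sP := Real.sqrt (P t) with hsPdef
    have hsu2 : su ^ 2 = ⟪q t, q t⟫ := Real.sq_sqrt hut.le
    have hsP2 : sP ^ 2 = P t := Real.sq_sqrt hPt.le
    rw [← hsu2, ← hsP2]
    field_simp
    ring
  -- constancy
  have key : ∀ x ∈ Set.Ioo a b, ∀ y ∈ Set.Ioo a b, E x = E y := by
    intro x hx y hy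
    refine (convex_Ioo a b).is_const_of_fderivWithin_eq_zero (𝕜 := ℝ) (f := E)
      (fun z hz => ((hd z hz).differentiableAt).differentiableWithinAt) ?_ hx hy
    intro z hz
    have h0 : fderiv ℝ E z = 0 := by
      have := (hd z hz).hasFDerivAt.fderiv
      rw [this]; ext x; simp
    rw [fderivWithin_of_isOpen isOpen_Ioo hz, h0]
  intro t₁ h₁ t₂ h₂
  rw [← hE t₁, ← hE t₂]
  exact key t₁ h₁ t₂ h₂
end

section
/- Let a : ℝ → ℝ be three times differentiable with a(t) ≠ 0 for all t, let c₀ be a real constant, and define ω(t) := a''(t)/(4a(t)) − (1/8)(a'(t)/a(t))² − c₀/(4a(t)²). Let q : ℝ → EuclideanSpace ℝ (Fin 3) be twice differentiable satisfying the 3d time-dependent oscillator equation q''(t) = 2ω(t)·q(t). Then for every pair of indices i, j the quantity Λ_{ij}(t) := a(t)·( q_i'(t)q_j'(t) − 2ω(t)q_i(t)q_j(t) ) − a'(t)·(1/2)(q_i(t)q_j'(t) + q_j(t)q_i'(t)) + (a''(t)/2)·q_i(t)q_j(t) is constant in t. -/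
set_option maxHeartbeats 2000000 in
/-- For the 3d time-dependent oscillator `q'' = 2ω(t)q` with
`ω = a''/(4a) − (1/8)(a'/a)² − c₀/(4a²)`, the quantities `Λ_{ij}` are first integrals. -/
theorem Lambda_ij_first_integral (a a' a'' a''' : ℝ → ℝ)
    (ha : ∀ t, HasDerivAt a (a' t) t)
    (ha' : ∀ t, HasDerivAt a' (a'' t) t)
    (ha'' : ∀ t, HasDerivAt a'' (a''' t) t)
    (hane : ∀ t, a t ≠ 0) (c₀ : ℝ)
    (ω : ℝ → ℝ)
    (hω : ∀ t, ω t = a'' t / (4 * a t) - (1 / 8) * (a' t / a t) ^ 2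
      - c₀ / (4 * (a t) ^ 2))
    (q q' q'' : ℝ → EuclideanSpace ℝ (Fin 3))
    (hq : ∀ t, HasDerivAt q (q' t) t)
    (hq' : ∀ t, HasDerivAt q' (q'' t) t)
    (heom : ∀ t, q'' t = (2 * ω t) • q t) :
    ∀ (i j : Fin 3) (t₁ t₂ : ℝ),
      a t₁ * (q' t₁ i * q' t₁ j - 2 * ω t₁ * q t₁ i * q t₁ j)
        - a' t₁ * ((1 / 2) * (q t₁ i * q' t₁ j + q t₁ j * q' t₁ i))
        + (a'' t₁ / 2) * (q t₁ i * q t₁ j)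
      = a t₂ * (q' t₂ i * q' t₂ j - 2 * ω t₂ * q t₂ i * q t₂ j)
        - a' t₂ * ((1 / 2) * (q t₂ i * q' t₂ j + q t₂ j * q' t₂ i))
        + (a'' t₂ / 2) * (q t₂ i * q t₂ j) := by
  intro i j t₁ t₂
  -- component derivatives
  have hqi : ∀ (k : Fin 3) (t : ℝ), HasDerivAt (fun t => q t k) (q' t k) t := by
    intro k t
    exact (EuclideanSpace.proj k).hasFDerivAt.comp_hasDerivAt t (hq t)
  have hqi' : ∀ (k : Fin 3) (t : ℝ), HasDerivAt (fun t => q' t k) (q'' t k) t := by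
    intro k t
    exact (EuclideanSpace.proj k).hasFDerivAt.comp_hasDerivAt t (hq' t)
  have hq2 : ∀ (k : Fin 3) (t : ℝ), q'' t k = 2 * ω t * q t k := by
    intro k t
    rw [heom t]
    simp [mul_assoc]
  -- derivative of ω
  set ω' : ℝ → ℝ := fun t =>
      (a''' t * (4 * a t) - a'' t * (4 * a' t)) / (4 * a t) ^ 2
      - (1 / 8) * (((2:ℕ):ℝ) * (a' t / a t) ^ 1 * ((a'' t * a t - a' t * a' t) / a t ^ 2))
      - (0 * (4 * a t ^ 2) - c₀ * (4 * (((2:ℕ):ℝ) * a t ^ 1 * a' t))) / (4 * a t ^ 2) ^ 2 with hω'def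
  have hωd : ∀ t, HasDerivAt ω (ω' t) t := by
    intro t
    have h1 : HasDerivAt (fun t => a'' t / (4 * a t))
        ((a''' t * (4 * a t) - a'' t * (4 * a' t)) / (4 * a t) ^ 2) t :=
      (ha'' t).div ((ha t).const_mul 4) (by simpa using hane t)
    have h2 : HasDerivAt (fun t => (1 / 8 : ℝ) * (a' t / a t) ^ 2)
        ((1 / 8) * (((2:ℕ):ℝ) * (a' t / a t) ^ 1 * ((a'' t * a t - a' t * a' t) / a t ^ 2))) t :=
      (((ha' t).div (ha t) (hane t)).pow 2).const_mul (1 / 8 : ℝ)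
    have h3 : HasDerivAt (fun t => c₀ / (4 * a t ^ 2))
        ((0 * (4 * a t ^ 2) - c₀ * (4 * (((2:ℕ):ℝ) * a t ^ 1 * a' t))) / (4 * a t ^ 2) ^ 2) t := by
      exact (hasDerivAt_const t c₀).div (((ha t).pow 2).const_mul 4)
        (mul_ne_zero (by norm_num) (pow_ne_zero 2 (hane t)))
    have : HasDerivAt (fun t => a'' t / (4 * a t) - (1 / 8 : ℝ) * (a' t / a t) ^ 2
        - c₀ / (4 * a t ^ 2)) (ω' t) t := (h1.sub h2).sub h3
    exact this.congr_of_eventuallyEq (Filter.Eventually.of_forall fun s => (hω s))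
  -- the first integral
  set Λ : ℝ → ℝ := fun t =>
    a t * (q' t i * q' t j - 2 * ω t * q t i * q t j)
      - a' t * ((1 / 2) * (q t i * q' t j + q t j * q' t i))
      + (a'' t / 2) * (q t i * q t j) with hΛ
  have key : ∀ t, HasDerivAt Λ 0 t := by
    intro t
    have h1 : HasDerivAt (fun t => a t * (q' t i * q' t j - 2 * ω t * q t i * q t j))
        (a' t * (q' t i * q' t j - 2 * ω t * q t i * q t j)
          + a t * ((q'' t i * q' t j + q' t i * q'' t j)
            - (((2 * ω' t * q t i + 2 * ω t * q' t i) * q t j)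
                + 2 * ω t * q t i * q' t j))) t := by
      exact (ha t).mul (((hqi' i t).mul (hqi' j t)).sub
        ((((hωd t).const_mul 2).mul (hqi i t)).mul (hqi j t)))
    have h2 : HasDerivAt (fun t => a' t * ((1 / 2 : ℝ) * (q t i * q' t j + q t j * q' t i)))
        (a'' t * ((1 / 2) * (q t i * q' t j + q t j * q' t i))
          + a' t * ((1 / 2) * ((q' t i * q' t j + q t i * q'' t j)
              + (q' t j * q' t i + q t j * q'' t i)))) t := by
      exact (ha' t).mul ((((hqi i t).mul (hqi' j t)).add
        ((hqi j t).mul (hqi' i t))).const_mul (1 / 2 : ℝ))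
    have h3 : HasDerivAt (fun t => (a'' t / 2) * (q t i * q t j))
        ((a''' t / 2) * (q t i * q t j)
          + (a'' t / 2) * (q' t i * q t j + q t i * q' t j)) t := by
      exact ((ha'' t).div_const 2).mul ((hqi i t).mul (hqi j t))
    have h := (h1.sub h2).add h3
    have hz : (a' t * (q' t i * q' t j - 2 * ω t * q t i * q t j)
          + a t * ((q'' t i * q' t j + q' t i * q'' t j)
            - (((2 * ω' t * q t i + 2 * ω t * q' t i) * q t j)
                + 2 * ω t * q t i * q' t j)))
        - (a'' t * ((1 / 2) * (q t i * q' t j + q t j * q' t i))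
          + a' t * ((1 / 2) * ((q' t i * q' t j + q t i * q'' t j)
              + (q' t j * q' t i + q t j * q'' t i))))
        + ((a''' t / 2) * (q t i * q t j)
          + (a'' t / 2) * (q' t i * q t j + q t i * q' t j)) = 0 := by
      rw [hq2 i t, hq2 j t, hω t, hω'def]
      have hA := hane t
      push_cast
      field_simp
      ring
    rw [hz] at h
    exact h
  have hconst := is_const_of_deriv_eq_zero (fun t => (key t).differentiableAt)
    (fun t => (key t).deriv)
  exact hconst t₁ t₂
end

section
/- Let ψ : ℝ → ℝ and let c₀ be a real constant. Let ρ, x : ℝ → ℝ be twice differentiable with ρ(t) ≠ 0 for all t, satisfying the auxiliary equation ρ''(t) + ψ(t)²·ρ(t) − c₀/(2ρ(t)³) = 0 and the time-dependent oscillator equation x''(t) + ψ(t)²·x(t) = 0. Then the Lewis invariant I(t) := (1/2)·( x(t)ρ'(t) − ρ(t)x'(t) )² + (c₀/4)·( x(t)/ρ(t) )² is constant in t. -/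
/-- The Lewis invariant of the 1d time-dependent harmonic oscillator together with
the Ermakov–Pinney auxiliary equation is a first integral. -/
theorem lewis_invariant (ψ : ℝ → ℝ) (c₀ : ℝ)
    (ρ ρ' ρ'' x x' x'' : ℝ → ℝ)
    (hρ : ∀ t, HasDerivAt ρ (ρ' t) t)
    (hρ' : ∀ t, HasDerivAt ρ' (ρ'' t) t)
    (hx : ∀ t, HasDerivAt x (x' t) t)
    (hx' : ∀ t, HasDerivAt x' (x'' t) t)
    (hρne : ∀ t, ρ t ≠ 0)
    (haux : ∀ t, ρ'' t + (ψ t) ^ 2 * ρ t - c₀ / (2 * (ρ t) ^ 3) = 0)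
    (hosc : ∀ t, x'' t + (ψ t) ^ 2 * x t = 0) :
    ∀ t₁ t₂,
      (1 / 2) * (x t₁ * ρ' t₁ - ρ t₁ * x' t₁) ^ 2 + (c₀ / 4) * (x t₁ / ρ t₁) ^ 2
      = (1 / 2) * (x t₂ * ρ' t₂ - ρ t₂ * x' t₂) ^ 2 + (c₀ / 4) * (x t₂ / ρ t₂) ^ 2 := by
  set I : ℝ → ℝ := fun t =>
    (1 / 2) * (x t * ρ' t - ρ t * x' t) ^ 2 + (c₀ / 4) * (x t / ρ t) ^ 2 with hI
  have key : ∀ t, HasDerivAt I 0 t := by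
    intro t
    have h1 : HasDerivAt (fun t => x t * ρ' t - ρ t * x' t)
        (x' t * ρ' t + x t * ρ'' t - (ρ' t * x' t + ρ t * x'' t)) t :=
      ((hx t).mul (hρ' t)).sub ((hρ t).mul (hx' t))
    have h2 : HasDerivAt (fun t => x t / ρ t)
        ((x' t * ρ t - x t * ρ' t) / (ρ t) ^ 2) t := (hx t).div (hρ t) (hρne t)
    have h3 : HasDerivAt I
        ((1 / 2) * (2 * (x t * ρ' t - ρ t * x' t) *
          (x' t * ρ' t + x t * ρ'' t - (ρ' t * x' t + ρ t * x'' t)))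
        + (c₀ / 4) * (2 * (x t / ρ t) * ((x' t * ρ t - x t * ρ' t) / (ρ t) ^ 2))) t := by
      have := ((h1.pow 2).const_mul (1/2)).add ((h2.pow 2).const_mul (c₀/4))
      simpa [hI, Pi.add_def] using this.congr_deriv (by push_cast; ring)
    convert h3 using 1
    have hx2 : x'' t = -((ψ t) ^ 2 * x t) := by linarith [hosc t]
    have hr2 : ρ'' t = c₀ / (2 * (ρ t) ^ 3) - (ψ t) ^ 2 * ρ t := by linarith [haux t]
    rw [hx2, hr2]
    have hne := hρne t
    field_simp
    ring
  have hd : ∀ t, deriv I t = 0 := fun t => (key t).deriv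
  intro t₁ t₂
  have := is_const_of_deriv_eq_zero (f := I) (fun t => (key t).differentiableAt) hd t₁ t₂
  simpa [hI] using this
end

section
/- Let g : ℝ → ℝ be twice differentiable with g(t) ≠ 0 for all t, and define ω(t) := g''(t)/(2g(t)). Let q : ℝ → EuclideanSpace ℝ (Fin 3) be twice differentiable satisfying the 3d time-dependent oscillator equation q''(t) = 2ω(t)·q(t). Then the vector I₄(t) := g(t)·q'(t) − g'(t)·q(t) is constant in t. -/
/-- For the 3d time-dependent oscillator `q'' = 2ω(t)q` with `ω = g''/(2g)`,
the vector `I₄ = g q' − g' q` is a first integral. -/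
theorem I4_first_integral (g g' g'' : ℝ → ℝ)
    (hg : ∀ t, HasDerivAt g (g' t) t)
    (hg' : ∀ t, HasDerivAt g' (g'' t) t)
    (hgne : ∀ t, g t ≠ 0)
    (ω : ℝ → ℝ) (hω : ∀ t, ω t = g'' t / (2 * g t))
    (q q' q'' : ℝ → EuclideanSpace ℝ (Fin 3))
    (hq : ∀ t, HasDerivAt q (q' t) t)
    (hq' : ∀ t, HasDerivAt q' (q'' t) t)
    (heom : ∀ t, q'' t = (2 * ω t) • q t) :
    ∀ t₁ t₂, g t₁ • q' t₁ - g' t₁ • q t₁ = g t₂ • q' t₂ - g' t₂ • q t₂ := by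
  have key : ∀ t, HasDerivAt (fun t => g t • q' t - g' t • q t) 0 t := by
    intro t
    have h1 := ((hg t).smul (hq' t)).sub ((hg' t).smul (hq t))
    refine h1.congr_deriv ?_
    rw [heom t, hω t, smul_smul]
    have : g t * (2 * (g'' t / (2 * g t))) = g'' t := by
      field_simp [hgne t]
    rw [this]
    abel
  intro t₁ t₂
  have := is_const_of_deriv_eq_zero (f := fun t => g t • q' t - g' t • q t)
    (fun t => (key t).differentiableAt) (fun t => (key t).deriv) t₁ t₂
  · exact this
end

section
/- Let f : ℝ → ℝ be twice differentiable with f(t) > 0 for all t, let c₀ > 0 be a real constant, and let θ : ℝ → ℝ be differentiable with θ'(t) = √(c₀/2)/f(t) for all t. Define ω(t) := f''(t)/(4f(t)) − (1/8)(f'(t)/f(t))² − c₀/(4f(t)²). Then both g₁(t) := √(f(t))·cos(θ(t)) and g₂(t) := √(f(t))·sin(θ(t)) satisfy g''(t) = 2ω(t)·g(t) for all t. -/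
/-- With `θ' = √(c₀/2)/f` and `ω = f''/(4f) − (1/8)(f'/f)² − c₀/(4f²)`, both
`√f·cos θ` and `√f·sin θ` satisfy the oscillator equation `g'' = 2ω g`. -/
theorem sqrtf_trig_solve_oscillator (f f' f'' : ℝ → ℝ)
    (hf : ∀ t, HasDerivAt f (f' t) t)
    (hf' : ∀ t, HasDerivAt f' (f'' t) t)
    (hfpos : ∀ t, 0 < f t)
    (c₀ : ℝ) (hc₀ : 0 < c₀)
    (θ : ℝ → ℝ) (hθ : ∀ t, HasDerivAt θ (Real.sqrt (c₀ / 2) / f t) t)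
    (ω : ℝ → ℝ)
    (hω : ∀ t, ω t = f'' t / (4 * f t) - (1 / 8) * (f' t / f t) ^ 2
      - c₀ / (4 * (f t) ^ 2)) :
    (∀ t, deriv (deriv fun s => Real.sqrt (f s) * Real.cos (θ s)) t
        = 2 * ω t * (Real.sqrt (f t) * Real.cos (θ t))) ∧
    (∀ t, deriv (deriv fun s => Real.sqrt (f s) * Real.sin (θ s)) t
        = 2 * ω t * (Real.sqrt (f t) * Real.sin (θ t))) := by
  set k := Real.sqrt (c₀ / 2) with hkdef
  have hk2 : k ^ 2 = c₀ / 2 := Real.sq_sqrt (by positivity)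
  have hc : c₀ = 2 * k ^ 2 := by rw [hk2]; ring
  have hs : ∀ t, HasDerivAt (fun s => Real.sqrt (f s)) (f' t / (2 * Real.sqrt (f t))) t :=
    fun t => (hf t).sqrt (hfpos t).ne'
  have hSpos : ∀ t, 0 < Real.sqrt (f t) := fun t => Real.sqrt_pos.mpr (hfpos t)
  have hcos : ∀ t, HasDerivAt (fun s => Real.cos (θ s)) (-Real.sin (θ t) * (k / f t)) t :=
    fun t => (hθ t).cos
  have hsin : ∀ t, HasDerivAt (fun s => Real.sin (θ s)) (Real.cos (θ t) * (k / f t)) t :=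
    fun t => (hθ t).sin
  have hq : ∀ t, HasDerivAt (fun s => k / f s)
      ((0 * f t - k * f' t) / (f t) ^ 2) t :=
    fun t => (hasDerivAt_const t k).div (hf t) (hfpos t).ne'
  have hA : ∀ t, HasDerivAt (fun s => f' s / (2 * Real.sqrt (f s)))
      ((f'' t * (2 * Real.sqrt (f t)) - f' t * (2 * (f' t / (2 * Real.sqrt (f t)))))
        / (2 * Real.sqrt (f t)) ^ 2) t :=
    fun t => (hf' t).div ((hs t).const_mul 2) (mul_ne_zero two_ne_zero (hSpos t).ne')
  constructor
  · intro t
    have hg : ∀ u, HasDerivAt (fun s => Real.sqrt (f s) * Real.cos (θ s))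
        (f' u / (2 * Real.sqrt (f u)) * Real.cos (θ u)
          + Real.sqrt (f u) * (-Real.sin (θ u) * (k / f u))) u :=
      fun u => (hs u).mul (hcos u)
    have hd1 : deriv (fun s => Real.sqrt (f s) * Real.cos (θ s))
        = fun u => f' u / (2 * Real.sqrt (f u)) * Real.cos (θ u)
          + Real.sqrt (f u) * (-Real.sin (θ u) * (k / f u)) :=
      funext fun u => (hg u).deriv
    rw [hd1]
    have hB : HasDerivAt (fun s => Real.sqrt (f s) * (-Real.sin (θ s) * (k / f s)))
        (f' t / (2 * Real.sqrt (f t)) * (-Real.sin (θ t) * (k / f t))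
          + Real.sqrt (f t) * (-(Real.cos (θ t) * (k / f t)) * (k / f t)
            + -Real.sin (θ t) * ((0 * f t - k * f' t) / (f t) ^ 2))) t :=
      (hs t).mul (((hsin t).neg).mul (hq t))
    have hD : HasDerivAt (fun u => f' u / (2 * Real.sqrt (f u)) * Real.cos (θ u)
          + Real.sqrt (f u) * (-Real.sin (θ u) * (k / f u)))
        (((f'' t * (2 * Real.sqrt (f t)) - f' t * (2 * (f' t / (2 * Real.sqrt (f t)))))
          / (2 * Real.sqrt (f t)) ^ 2) * Real.cos (θ t)
          + f' t / (2 * Real.sqrt (f t)) * (-Real.sin (θ t) * (k / f t))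
          + (f' t / (2 * Real.sqrt (f t)) * (-Real.sin (θ t) * (k / f t))
          + Real.sqrt (f t) * (-(Real.cos (θ t) * (k / f t)) * (k / f t)
            + -Real.sin (θ t) * ((0 * f t - k * f' t) / (f t) ^ 2)))) t :=
      ((hA t).mul (hcos t)).add hB
    rw [hD.deriv, hω t]
    have hS2 : Real.sqrt (f t) ^ 2 = f t := Real.sq_sqrt (hfpos t).le
    set S := Real.sqrt (f t) with hSdef
    rw [hc, ← hS2]
    have hSne : S ≠ 0 := (hSpos t).ne'
    field_simp
    ring
  · intro t
    have hg : ∀ u, HasDerivAt (fun s => Real.sqrt (f s) * Real.sin (θ s))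
        (f' u / (2 * Real.sqrt (f u)) * Real.sin (θ u)
          + Real.sqrt (f u) * (Real.cos (θ u) * (k / f u))) u :=
      fun u => (hs u).mul (hsin u)
    have hd1 : deriv (fun s => Real.sqrt (f s) * Real.sin (θ s))
        = fun u => f' u / (2 * Real.sqrt (f u)) * Real.sin (θ u)
          + Real.sqrt (f u) * (Real.cos (θ u) * (k / f u)) :=
      funext fun u => (hg u).deriv
    rw [hd1]
    have hB : HasDerivAt (fun s => Real.sqrt (f s) * (Real.cos (θ s) * (k / f s)))
        (f' t / (2 * Real.sqrt (f t)) * (Real.cos (θ t) * (k / f t))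
          + Real.sqrt (f t) * ((-Real.sin (θ t) * (k / f t)) * (k / f t)
            + Real.cos (θ t) * ((0 * f t - k * f' t) / (f t) ^ 2))) t :=
      (hs t).mul ((hcos t).mul (hq t))
    have hD : HasDerivAt (fun u => f' u / (2 * Real.sqrt (f u)) * Real.sin (θ u)
          + Real.sqrt (f u) * (Real.cos (θ u) * (k / f u)))
        (((f'' t * (2 * Real.sqrt (f t)) - f' t * (2 * (f' t / (2 * Real.sqrt (f t)))))
          / (2 * Real.sqrt (f t)) ^ 2) * Real.sin (θ t)
          + f' t / (2 * Real.sqrt (f t)) * (Real.cos (θ t) * (k / f t))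
          + (f' t / (2 * Real.sqrt (f t)) * (Real.cos (θ t) * (k / f t))
          + Real.sqrt (f t) * ((-Real.sin (θ t) * (k / f t)) * (k / f t)
            + Real.cos (θ t) * ((0 * f t - k * f' t) / (f t) ^ 2)))) t :=
      ((hA t).mul (hsin t)).add hB
    rw [hD.deriv, hω t]
    have hS2 : Real.sqrt (f t) ^ 2 = f t := Real.sq_sqrt (hfpos t).le
    set S := Real.sqrt (f t) with hSdef
    rw [hc, ← hS2]
    have hSne : S ≠ 0 := (hSpos t).ne'
    field_simp
    ring
end

section
/- Let f : ℝ → ℝ be twice differentiable with f(t) > 0 for all t, let c₀ > 0 be a real constant, and let θ : ℝ → ℝ be differentiable with θ'(t) = √(c₀/2)/f(t). Define ω(t) := f''(t)/(4f(t)) − (1/8)(f'(t)/f(t))² − c₀/(4f(t)²). Let q : ℝ → EuclideanSpace ℝ (Fin 3) be twice differentiable satisfying q''(t) = 2ω(t)·q(t). Then for each index i the quantities I₄₁ᵢ(t) := √(c₀/2)·f(t)^(−1/2)·q_i(t)·sin(θ(t)) + ( f(t)^(1/2)·q_i'(t) − (f'(t)/2)·f(t)^(−1/2)·q_i(t) )·cos(θ(t))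 and I₄₂ᵢ(t) := −√(c₀/2)·f(t)^(−1/2)·q_i(t)·cos(θ(t)) + ( f(t)^(1/2)·q_i'(t) − (f'(t)/2)·f(t)^(−1/2)·q_i(t) )·sin(θ(t)) are constant in t. -/
theorem scalar_key (f f' f'' : ℝ → ℝ)
    (hf : ∀ t, HasDerivAt f (f' t) t)
    (hf' : ∀ t, HasDerivAt f' (f'' t) t)
    (hfpos : ∀ t, 0 < f t)
    (c₀ : ℝ) (hc₀ : 0 < c₀)
    (θ : ℝ → ℝ) (hθ : ∀ t, HasDerivAt θ (Real.sqrt (c₀ / 2) / f t) t)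
    (ω : ℝ → ℝ)
    (hω : ∀ t, ω t = f'' t / (4 * f t) - (1 / 8) * (f' t / f t) ^ 2
      - c₀ / (4 * (f t) ^ 2))
    (x x' x'' : ℝ → ℝ)
    (hx : ∀ t, HasDerivAt x (x' t) t)
    (hx' : ∀ t, HasDerivAt x' (x'' t) t)
    (heom : ∀ t, x'' t = 2 * ω t * x t) (t : ℝ) :
    HasDerivAt (fun t => Real.sqrt (c₀ / 2) * f t ^ (-(1 : ℝ) / 2) * x t * Real.sin (θ t)
        + (f t ^ ((1 : ℝ) / 2) * x' t
            - (f' t / 2) * f t ^ (-(1 : ℝ) / 2) * x t) * Real.cos (θ t)) 0 t ∧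
    HasDerivAt (fun t => -(Real.sqrt (c₀ / 2)) * f t ^ (-(1 : ℝ) / 2) * x t * Real.cos (θ t)
        + (f t ^ ((1 : ℝ) / 2) * x' t
            - (f' t / 2) * f t ^ (-(1 : ℝ) / 2) * x t) * Real.sin (θ t)) 0 t := by
  set s := Real.sqrt (c₀ / 2) with hs
  have hF : (0:ℝ) < f t := hfpos t
  have hFne : f t ≠ 0 := hF.ne'
  have hs2 : s ^ 2 = c₀ / 2 := Real.sq_sqrt (by positivity)
  have hc : c₀ = 2 * s ^ 2 := by rw [hs2]; ring
  -- derivative of f^(-1/2)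
  have hu : HasDerivAt (fun t => f t ^ (-(1:ℝ)/2))
      (-(f' t) * f t ^ (-(1:ℝ)/2) / (2 * f t)) t := by
    have h := (hf t).rpow_const (p := -(1:ℝ)/2) (Or.inl hFne)
    convert h using 1
    rw [show -(1:ℝ)/2 - 1 = (-(1:ℝ)/2) + (-1) by ring, Real.rpow_add hF, Real.rpow_neg_one]
    field_simp
  have hv : HasDerivAt (fun t => f t ^ ((1:ℝ)/2))
      (f' t * f t ^ (-(1:ℝ)/2) / 2) t := by
    have h := (hf t).rpow_const (p := (1:ℝ)/2) (Or.inl hFne)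
    convert h using 1
    rw [show (1:ℝ)/2 - 1 = -(1:ℝ)/2 by ring]
    ring
  have hvF : f t ^ ((1:ℝ)/2) = f t * f t ^ (-(1:ℝ)/2) := by
    rw [show (1:ℝ)/2 = 1 + (-(1:ℝ)/2) by ring, Real.rpow_add hF, Real.rpow_one]
  have hsin : HasDerivAt (fun t => Real.sin (θ t)) (Real.cos (θ t) * (s / f t)) t :=
    (Real.hasDerivAt_sin (θ t)).comp t (hθ t)
  have hcos : HasDerivAt (fun t => Real.cos (θ t)) (-Real.sin (θ t) * (s / f t)) t :=
    (Real.hasDerivAt_cos (θ t)).comp t (hθ t)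
  have hA : HasDerivAt (fun t => s * f t ^ (-(1:ℝ)/2) * x t)
      ((s * (-(f' t) * f t ^ (-(1:ℝ)/2) / (2 * f t))) * x t
        + s * f t ^ (-(1:ℝ)/2) * x' t) t :=
    ((hu.const_mul s).mul (hx t))
  have hB : HasDerivAt (fun t => f t ^ ((1:ℝ)/2) * x' t - (f' t / 2) * f t ^ (-(1:ℝ)/2) * x t)
      ((f' t * f t ^ (-(1:ℝ)/2) / 2) * x' t + f t ^ ((1:ℝ)/2) * x'' t
        - (((f'' t / 2) * f t ^ (-(1:ℝ)/2)
            + (f' t / 2) * (-(f' t) * f t ^ (-(1:ℝ)/2) / (2 * f t))) * x t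
          + (f' t / 2) * f t ^ (-(1:ℝ)/2) * x' t)) t :=
    (hv.mul (hx' t)).sub ((((hf' t).div_const 2).mul hu).mul (hx t))
  constructor
  · have h := (hA.mul hsin).add (hB.mul hcos)
    refine h.congr_deriv ?_
    rw [heom t, hω, hvF, hc]
    field_simp
    ring
  · have h := ((hA.neg).mul hcos).add (hB.mul hsin)
    have h' : HasDerivAt (fun t => -(s * f t ^ (-(1:ℝ)/2) * x t) * Real.cos (θ t)
        + (f t ^ ((1:ℝ)/2) * x' t - (f' t / 2) * f t ^ (-(1:ℝ)/2) * x t) * Real.sin (θ t)) _ t := h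
    have heq : (fun t => -(s * f t ^ (-(1:ℝ)/2) * x t) * Real.cos (θ t)
        + (f t ^ ((1:ℝ)/2) * x' t - (f' t / 2) * f t ^ (-(1:ℝ)/2) * x t) * Real.sin (θ t))
        = (fun t => -s * f t ^ (-(1:ℝ)/2) * x t * Real.cos (θ t)
        + (f t ^ ((1:ℝ)/2) * x' t - (f' t / 2) * f t ^ (-(1:ℝ)/2) * x t) * Real.sin (θ t)) := by
      funext u; ring
    rw [heq] at h'
    convert h' using 1
    simp only [Pi.neg_apply]
    rw [heom t, hω, hvF, hc]
    field_simp
    ring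

/-- For the 3d time-dependent oscillator with frequency
`ω = f''/(4f) − (1/8)(f'/f)² − c₀/(4f²)` and `θ' = √(c₀/2)/f`, the linear
quantities `I₄₁ᵢ` and `I₄₂ᵢ` are first integrals. -/
theorem I41_I42_first_integrals (f f' f'' : ℝ → ℝ)
    (hf : ∀ t, HasDerivAt f (f' t) t)
    (hf' : ∀ t, HasDerivAt f' (f'' t) t)
    (hfpos : ∀ t, 0 < f t)
    (c₀ : ℝ) (hc₀ : 0 < c₀)
    (θ : ℝ → ℝ) (hθ : ∀ t, HasDerivAt θ (Real.sqrt (c₀ / 2) / f t) t)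
    (ω : ℝ → ℝ)
    (hω : ∀ t, ω t = f'' t / (4 * f t) - (1 / 8) * (f' t / f t) ^ 2
      - c₀ / (4 * (f t) ^ 2))
    (q q' q'' : ℝ → EuclideanSpace ℝ (Fin 3))
    (hq : ∀ t, HasDerivAt q (q' t) t)
    (hq' : ∀ t, HasDerivAt q' (q'' t) t)
    (heom : ∀ t, q'' t = (2 * ω t) • q t) :
    ∀ (i : Fin 3) (t₁ t₂ : ℝ),
      (Real.sqrt (c₀ / 2) * f t₁ ^ (-(1 : ℝ) / 2) * q t₁ i * Real.sin (θ t₁)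
        + (f t₁ ^ ((1 : ℝ) / 2) * q' t₁ i
            - (f' t₁ / 2) * f t₁ ^ (-(1 : ℝ) / 2) * q t₁ i) * Real.cos (θ t₁)
      = Real.sqrt (c₀ / 2) * f t₂ ^ (-(1 : ℝ) / 2) * q t₂ i * Real.sin (θ t₂)
        + (f t₂ ^ ((1 : ℝ) / 2) * q' t₂ i
            - (f' t₂ / 2) * f t₂ ^ (-(1 : ℝ) / 2) * q t₂ i) * Real.cos (θ t₂)) ∧
      (-(Real.sqrt (c₀ / 2)) * f t₁ ^ (-(1 : ℝ) / 2) * q t₁ i * Real.cos (θ t₁)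
        + (f t₁ ^ ((1 : ℝ) / 2) * q' t₁ i
            - (f' t₁ / 2) * f t₁ ^ (-(1 : ℝ) / 2) * q t₁ i) * Real.sin (θ t₁)
      = -(Real.sqrt (c₀ / 2)) * f t₂ ^ (-(1 : ℝ) / 2) * q t₂ i * Real.cos (θ t₂)
        + (f t₂ ^ ((1 : ℝ) / 2) * q' t₂ i
            - (f' t₂ / 2) * f t₂ ^ (-(1 : ℝ) / 2) * q t₂ i) * Real.sin (θ t₂)) := by
  intro i t₁ t₂
  have hx : ∀ t, HasDerivAt (fun t => q t i) (q' t i) t := fun t =>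
    (EuclideanSpace.proj (𝕜 := ℝ) i).hasFDerivAt.comp_hasDerivAt t (hq t)
  have hx' : ∀ t, HasDerivAt (fun t => q' t i) (q'' t i) t := fun t =>
    (EuclideanSpace.proj (𝕜 := ℝ) i).hasFDerivAt.comp_hasDerivAt t (hq' t)
  have heomi : ∀ t, q'' t i = 2 * ω t * q t i := fun t => by
    rw [heom t]; simp [smul_eq_mul]
  have key := scalar_key f f' f'' hf hf' hfpos c₀ hc₀ θ hθ ω hω
    (fun t => q t i) (fun t => q' t i) (fun t => q'' t i) hx hx' heomi
  constructor
  · exact is_const_of_deriv_eq_zero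
      (fun t => ((key t).1).differentiableAt) (fun t => ((key t).1).deriv) t₁ t₂
  · exact is_const_of_deriv_eq_zero
      (fun t => ((key t).2).differentiableAt) (fun t => ((key t).2).deriv) t₁ t₂
end

section
/- Let n ≥ 1, let Q : EuclideanSpace ℝ (Fin n) → EuclideanSpace ℝ (Fin n) be differentiable, let L : EuclideanSpace ℝ (Fin n) → EuclideanSpace ℝ (Fin n) be twice differentiable, and let λ, b₀, b₁ be real constants with λ ≠ 0 and b₁ ≠ 0. Define S_{ab}(x) := (1/2)(∂_a L_b(x) + ∂_b L_a(x)). Assume: (i) S is a Killing tensor of the Euclidean metric, i.e. ∂_c S_{ab} + ∂_a S_{bc} + ∂_b S_{ca} = 0 for all indices a,b,c and all x; (ii) ∂_a( Σ_b L_b(x)·Q_b(x) ) = (λ³/b₁)·L_a(x) for all a and x; (iii) λ³·L_a(x) = −2b₁·Σ_b S_{ab}(x)·Q_b(x) for all a and x. Let q : ℝ → EuclideanSpace ℝ (Fin n) be twice differentiable satisfying q''(t) = −(b₀ + b₁t)·Q(q(t)). Then the quantity I_e(t) := −e^{λt}·Σ_{a,b} S_{ab}(q(t))·q_a'(t)·q_b'(t)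 + λ·e^{λt}·Σ_a L_a(q(t))·q_a'(t) + (b₀ − b₁/λ)·e^{λt}·Σ_a L_a(q(t))·Q_a(q(t)) + b₁·t·e^{λt}·Σ_a L_a(q(t))·Q_a(q(t)) is constant in t. -/
open Finset

lemma euclid_decomp {n : ℕ} (v : EuclideanSpace ℝ (Fin n)) :
    ∑ c, v c • EuclideanSpace.single c (1:ℝ) = v := by
  ext j
  have : (∑ c : Fin n, v c • EuclideanSpace.single c (1:ℝ)) j
      = ∑ c : Fin n, (v c • EuclideanSpace.single c (1:ℝ)) j :=
    by rw [WithLp.ofLp_sum]; exact Finset.sum_apply j Finset.univ _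
  rw [this]
  simp [EuclideanSpace.single_apply]

lemma fderiv_decomp {n : ℕ} (f : EuclideanSpace ℝ (Fin n) → ℝ)
    (x v : EuclideanSpace ℝ (Fin n)) :
    fderiv ℝ f x v = ∑ c, v c * fderiv ℝ f x (EuclideanSpace.single c 1) := by
  conv_lhs => rw [← euclid_decomp v]
  rw [map_sum]
  simp

lemma coord_fderiv {n : ℕ} (f : EuclideanSpace ℝ (Fin n) → EuclideanSpace ℝ (Fin n))
    (x : EuclideanSpace ℝ (Fin n)) (hf : DifferentiableAt ℝ f x) (a : Fin n)
    (w : EuclideanSpace ℝ (Fin n)) :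
    fderiv ℝ (fun y => f y a) x w = (fderiv ℝ f x w) a := by
  have hp : HasFDerivAt (⇑(EuclideanSpace.proj (𝕜 := ℝ) a) ∘ f)
      ((EuclideanSpace.proj (𝕜 := ℝ) a).comp (fderiv ℝ f x)) x :=
    (EuclideanSpace.proj (𝕜 := ℝ) a).hasFDerivAt.comp x hf.hasFDerivAt
  have h : HasFDerivAt (fun y => f y a)
      ((EuclideanSpace.proj (𝕜 := ℝ) a).comp (fderiv ℝ f x)) x := hp
  rw [h.fderiv]
  rfl

lemma coord_diff {n : ℕ} (f : EuclideanSpace ℝ (Fin n) → EuclideanSpace ℝ (Fin n))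
    (hf : Differentiable ℝ f) (a : Fin n) :
    Differentiable ℝ (fun y => f y a) := by
  have h : Differentiable ℝ (⇑(EuclideanSpace.proj (𝕜 := ℝ) a) ∘ f) :=
    (EuclideanSpace.proj (𝕜 := ℝ) a : EuclideanSpace ℝ (Fin n) →L[ℝ] ℝ).differentiable.comp hf
  exact h

lemma sum_swap2 {n : ℕ} (h : Fin n → Fin n → ℝ) :
    (∑ a, ∑ b, h a b) = ∑ b, ∑ a, h a b := Finset.sum_comm

lemma sum_swap3 {n : ℕ} (h : Fin n → Fin n → Fin n → ℝ) :
    (∑ a, ∑ b, ∑ c, h a b c) = ∑ b, ∑ c, ∑ a, h a b c := by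
  rw [Finset.sum_comm]
  exact Finset.sum_congr rfl fun b _ => Finset.sum_comm

lemma sum_congr3 {n : ℕ} (h k : Fin n → Fin n → Fin n → ℝ)
    (he : ∀ a b c, h a b c = k a b c) :
    (∑ a, ∑ b, ∑ c, h a b c) = ∑ a, ∑ b, ∑ c, k a b c :=
  Finset.sum_congr rfl fun a _ => Finset.sum_congr rfl fun b _ =>
    Finset.sum_congr rfl fun c _ => he a b c

lemma sum_congr2 {n : ℕ} (h k : Fin n → Fin n → ℝ)
    (he : ∀ a b, h a b = k a b) :
    (∑ a, ∑ b, h a b) = ∑ a, ∑ b, k a b :=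
  Finset.sum_congr rfl fun a _ => Finset.sum_congr rfl fun b _ => he a b

lemma sum2_add {n : ℕ} (X Y : Fin n → Fin n → ℝ) :
    (∑ a, ∑ b, (X a b + Y a b)) = (∑ a, ∑ b, X a b) + ∑ a, ∑ b, Y a b := by
  simp [Finset.sum_add_distrib]

lemma sum3_add {n : ℕ} (X Y : Fin n → Fin n → Fin n → ℝ) :
    (∑ a, ∑ b, ∑ c, (X a b c + Y a b c))
      = (∑ a, ∑ b, ∑ c, X a b c) + ∑ a, ∑ b, ∑ c, Y a b c := by
  simp [Finset.sum_add_distrib]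

/-- Integral 2 of Theorem 1: for the system `q'' = −(b₀ + b₁ t) Q(q)` in Euclidean
space, with `S_{ab} = L_{(a,b)}` a Killing tensor satisfying the stated constraints,
the quantity `I_e` is a first integral. -/
theorem Ie_first_integral (n : ℕ) (hn : 1 ≤ n)
    (Q L : EuclideanSpace ℝ (Fin n) → EuclideanSpace ℝ (Fin n))
    (hQ : Differentiable ℝ Q)
    (hL : Differentiable ℝ L)
    (hL' : Differentiable ℝ (fderiv ℝ L))
    (lam b₀ b₁ : ℝ) (hlam : lam ≠ 0) (hb₁ : b₁ ≠ 0)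
    (S : EuclideanSpace ℝ (Fin n) → Fin n → Fin n → ℝ)
    (hS : ∀ x a b, S x a b =
      (1 / 2) * (fderiv ℝ (fun y => L y b) x (EuclideanSpace.single a 1)
        + fderiv ℝ (fun y => L y a) x (EuclideanSpace.single b 1)))
    (hKT : ∀ (x : EuclideanSpace ℝ (Fin n)) (a b c : Fin n),
      fderiv ℝ (fun y => S y a b) x (EuclideanSpace.single c 1)
        + fderiv ℝ (fun y => S y b c) x (EuclideanSpace.single a 1)
        + fderiv ℝ (fun y => S y c a) x (EuclideanSpace.single b 1) = 0)
    (hgrad : ∀ (x : EuclideanSpace ℝ (Fin n)) (a : Fin n),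
      fderiv ℝ (fun y => ∑ b : Fin n, L y b * Q y b) x (EuclideanSpace.single a 1)
        = (lam ^ 3 / b₁) * L x a)
    (hvec : ∀ (x : EuclideanSpace ℝ (Fin n)) (a : Fin n),
      lam ^ 3 * L x a = -2 * b₁ * ∑ b : Fin n, S x a b * Q x b)
    (q q' q'' : ℝ → EuclideanSpace ℝ (Fin n))
    (hq : ∀ t, HasDerivAt q (q' t) t)
    (hq' : ∀ t, HasDerivAt q' (q'' t) t)
    (heom : ∀ t, q'' t = (-(b₀ + b₁ * t)) • Q (q t)) :
    ∀ t₁ t₂,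
      -Real.exp (lam * t₁) * (∑ a : Fin n, ∑ b : Fin n, S (q t₁) a b * q' t₁ a * q' t₁ b)
        + lam * Real.exp (lam * t₁) * (∑ a : Fin n, L (q t₁) a * q' t₁ a)
        + (b₀ - b₁ / lam) * Real.exp (lam * t₁) * (∑ a : Fin n, L (q t₁) a * Q (q t₁) a)
        + b₁ * t₁ * Real.exp (lam * t₁) * (∑ a : Fin n, L (q t₁) a * Q (q t₁) a)
      = -Real.exp (lam * t₂) * (∑ a : Fin n, ∑ b : Fin n, S (q t₂) a b * q' t₂ a * q' t₂ b)
        + lam * Real.exp (lam * t₂) * (∑ a : Fin n, L (q t₂) a * q' t₂ a)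
        + (b₀ - b₁ / lam) * Real.exp (lam * t₂) * (∑ a : Fin n, L (q t₂) a * Q (q t₂) a)
        + b₁ * t₂ * Real.exp (lam * t₂) * (∑ a : Fin n, L (q t₂) a * Q (q t₂) a) := by
  -- coordinate differentiabilities
  have hLc : ∀ a, Differentiable ℝ (fun y => L y a) := fun a => coord_diff L hL a
  have hQc : ∀ a, Differentiable ℝ (fun y => Q y a) := fun a => coord_diff Q hQ a
  -- differentiability of partial derivatives of L
  have hDdiff : ∀ (w : EuclideanSpace ℝ (Fin n)) (b : Fin n),
      Differentiable ℝ (fun x => fderiv ℝ (fun y => L y b) x w) := by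
    intro w b
    have heq : (fun x => fderiv ℝ (fun y => L y b) x w)
        = fun x => (fderiv ℝ L x w) b :=
      funext fun x => coord_fderiv L x (hL x) b w
    rw [heq]
    have h1 : Differentiable ℝ (fun x => fderiv ℝ L x w) := by
      have h2 : Differentiable ℝ
          (⇑(ContinuousLinearMap.apply ℝ (EuclideanSpace ℝ (Fin n)) w) ∘ fderiv ℝ L) :=
        (ContinuousLinearMap.apply ℝ (EuclideanSpace ℝ (Fin n)) w).differentiable.comp hL'
      exact h2
    exact coord_diff _ h1 b
  -- differentiability of S
  have hSdiff : ∀ a b, Differentiable ℝ (fun x => S x a b) := by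
    intro a b
    have heq : (fun x => S x a b) = fun x =>
        (1/2) * (fderiv ℝ (fun y => L y b) x (EuclideanSpace.single a 1)
          + fderiv ℝ (fun y => L y a) x (EuclideanSpace.single b 1)) :=
      funext fun x => hS x a b
    rw [heq]
    exact ((hDdiff _ b).add (hDdiff _ a)).const_mul _
  -- symmetry of S
  have hSsymm : ∀ x a b, S x a b = S x b a := fun x a b => by rw [hS, hS]; ring
  -- rearranged hvec
  have hvec' : ∀ x a, (∑ b, S x a b * Q x b) = -(lam^3/(2*b₁)) * L x a := by
    intro x a
    have h := hvec x a
    field_simp at h ⊢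
    linarith
  -- eom coordinatewise
  have hq'' : ∀ t a, q'' t a = -(b₀ + b₁ * t) * Q (q t) a := by
    intro t a
    rw [heom t]
    rfl
  -- coordinate derivatives along q
  have hq'a : ∀ t (a : Fin n), HasDerivAt (fun s => q' s a) (q'' t a) t := by
    intro t a
    have hp := (EuclideanSpace.proj a : EuclideanSpace ℝ (Fin n) →L[ℝ] ℝ).hasFDerivAt
      (x := q' t)
    exact hp.comp_hasDerivAt t (hq' t)
  have hLa : ∀ t (a : Fin n), HasDerivAt (fun s => L (q s) a)
      (fderiv ℝ (fun y => L y a) (q t) (q' t)) t := fun t a =>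
    ((hLc a (q t)).hasFDerivAt).comp_hasDerivAt t (hq t)
  have hSt : ∀ t (a b : Fin n), HasDerivAt (fun s => S (q s) a b)
      (fderiv ℝ (fun y => S y a b) (q t) (q' t)) t := fun t a b =>
    ((hSdiff a b (q t)).hasFDerivAt).comp_hasDerivAt t (hq t)
  -- derivative of C
  have hΦdiff : Differentiable ℝ (fun y => ∑ b : Fin n, L y b * Q y b) :=
    Differentiable.fun_sum fun b _ => (hLc b).mul (hQc b)
  have hC : ∀ t, HasDerivAt (fun s => ∑ a : Fin n, L (q s) a * Q (q s) a)
      ((lam^3/b₁) * ∑ a : Fin n, L (q t) a * q' t a) t := by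
    intro t
    have h0 : HasDerivAt (fun s => ∑ b : Fin n, L (q s) b * Q (q s) b)
        (fderiv ℝ (fun y => ∑ b : Fin n, L y b * Q y b) (q t) (q' t)) t :=
      ((hΦdiff (q t)).hasFDerivAt).comp_hasDerivAt t (hq t)
    have hval : fderiv ℝ (fun y => ∑ b : Fin n, L y b * Q y b) (q t) (q' t)
        = (lam^3/b₁) * ∑ a : Fin n, L (q t) a * q' t a := by
      rw [fderiv_decomp, Finset.mul_sum]
      refine Finset.sum_congr rfl fun a _ => ?_
      rw [hgrad (q t) a]; ring
    rw [← hval]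
    exact h0
  -- canonical quadratic form
  have hquad : ∀ t, (∑ a : Fin n, ∑ b : Fin n, S (q t) a b * q' t a * q' t b)
      = ∑ a : Fin n, ∑ b : Fin n,
        fderiv ℝ (fun y => L y a) (q t) (EuclideanSpace.single b 1) * q' t a * q' t b := by
    intro t
    have swap : (∑ a : Fin n, ∑ b : Fin n,
          (1/2) * (fderiv ℝ (fun y => L y b) (q t) (EuclideanSpace.single a 1)
            * q' t a * q' t b))
        = ∑ a : Fin n, ∑ b : Fin n,
          (1/2) * (fderiv ℝ (fun y => L y a) (q t) (EuclideanSpace.single b 1)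
            * q' t a * q' t b) := by
      rw [sum_swap2 (fun a b => (1/2) * (fderiv ℝ (fun y => L y b) (q t)
        (EuclideanSpace.single a 1) * q' t a * q' t b))]
      exact sum_congr2 _ _ fun a b => by ring
    have expand : ∀ a b : Fin n, S (q t) a b * q' t a * q' t b
        = (1/2) * (fderiv ℝ (fun y => L y b) (q t) (EuclideanSpace.single a 1)
            * q' t a * q' t b)
          + (1/2) * (fderiv ℝ (fun y => L y a) (q t) (EuclideanSpace.single b 1)
            * q' t a * q' t b) := fun a b => by rw [hS]; ring
    rw [sum_congr2 _ _ expand, sum2_add, swap]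
    rw [← Finset.sum_add_distrib]
    refine Finset.sum_congr rfl fun a _ => ?_
    rw [← Finset.sum_add_distrib]
    refine Finset.sum_congr rfl fun b _ => by ring
  -- derivative of B
  have hB : ∀ t, HasDerivAt (fun s => ∑ a : Fin n, L (q s) a * q' s a)
      ((∑ a : Fin n, ∑ b : Fin n, S (q t) a b * q' t a * q' t b)
        - (b₀ + b₁*t) * ∑ a : Fin n, L (q t) a * Q (q t) a) t := by
    intro t
    have h0 : HasDerivAt (fun s => ∑ a : Fin n, L (q s) a * q' s a)
        (∑ a : Fin n, (fderiv ℝ (fun y => L y a) (q t) (q' t) * q' t a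
          + L (q t) a * q'' t a)) t :=
      HasDerivAt.fun_sum fun a _ => (hLa t a).mul (hq'a t a)
    have hval : (∑ a : Fin n, (fderiv ℝ (fun y => L y a) (q t) (q' t) * q' t a
          + L (q t) a * q'' t a))
        = (∑ a : Fin n, ∑ b : Fin n, S (q t) a b * q' t a * q' t b)
          - (b₀ + b₁*t) * ∑ a : Fin n, L (q t) a * Q (q t) a := by
      rw [Finset.sum_add_distrib]
      have e1 : (∑ a : Fin n, fderiv ℝ (fun y => L y a) (q t) (q' t) * q' t a)
          = ∑ a : Fin n, ∑ b : Fin n,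
            fderiv ℝ (fun y => L y a) (q t) (EuclideanSpace.single b 1) * q' t a * q' t b := by
        refine Finset.sum_congr rfl fun a _ => ?_
        rw [fderiv_decomp, Finset.sum_mul]
        exact Finset.sum_congr rfl fun b _ => by ring
      have e2 : (∑ a : Fin n, L (q t) a * q'' t a)
          = -((b₀ + b₁*t) * ∑ a : Fin n, L (q t) a * Q (q t) a) := by
        rw [Finset.mul_sum, ← Finset.sum_neg_distrib]
        refine Finset.sum_congr rfl fun a _ => ?_
        rw [hq'' t a]; ring
      rw [e1, e2, hquad t]
      ring
    rw [← hval]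
    exact h0
  -- Killing contraction vanishes
  have hKill : ∀ t, (∑ a : Fin n, ∑ b : Fin n,
      fderiv ℝ (fun y => S y a b) (q t) (q' t) * q' t a * q' t b) = 0 := by
    intro t
    set x := q t with hx
    set v := q' t with hv
    have hg : ∀ a b : Fin n, fderiv ℝ (fun y => S y a b) x v * v a * v b
        = ∑ c : Fin n, fderiv ℝ (fun y => S y a b) x (EuclideanSpace.single c 1)
            * v a * v b * v c := by
      intro a b
      rw [fderiv_decomp, Finset.sum_mul, Finset.sum_mul]
      exact Finset.sum_congr rfl fun c _ => by ring
    rw [sum_congr2 _ _ (fun a b => hg a b)]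
    set P : Fin n → Fin n → Fin n → ℝ := fun a b c =>
      fderiv ℝ (fun y => S y a b) x (EuclideanSpace.single c 1) * v a * v b * v c with hP
    show (∑ a, ∑ b, ∑ c, P a b c) = 0
    have r1 : (∑ a, ∑ b, ∑ c, P a b c)
        = ∑ a, ∑ b, ∑ c, fderiv ℝ (fun y => S y c a) x (EuclideanSpace.single b 1)
            * v a * v b * v c := by
      rw [sum_swap3 P]
      exact sum_congr3 _ _ fun a b c => by rw [hP]; ring
    have r2 : (∑ a, ∑ b, ∑ c, P a b c)
        = ∑ a, ∑ b, ∑ c, fderiv ℝ (fun y => S y b c) x (EuclideanSpace.single a 1)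
            * v a * v b * v c := by
      rw [sum_swap3 P, sum_swap3]
      exact sum_congr3 _ _ fun a b c => by rw [hP]; ring
    have r0 : (∑ a, ∑ b, ∑ c, P a b c) + (∑ a, ∑ b, ∑ c, P a b c)
        + (∑ a, ∑ b, ∑ c, P a b c) = 0 := by
      nth_rewrite 2 [r2]
      nth_rewrite 2 [r1]
      rw [← sum3_add, ← sum3_add]
      refine Finset.sum_eq_zero fun a _ => ?_
      refine Finset.sum_eq_zero fun b _ => ?_
      refine Finset.sum_eq_zero fun c _ => ?_
      rw [hP]
      have h := hKT x a b c
      linear_combination (v a * v b * v c) * h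
    linarith
  -- derivative of A
  have hA : ∀ t, HasDerivAt
      (fun s => ∑ a : Fin n, ∑ b : Fin n, S (q s) a b * q' s a * q' s b)
      ((b₀ + b₁*t) * (lam^3/b₁) * ∑ a : Fin n, L (q t) a * q' t a) t := by
    intro t
    have h0 : HasDerivAt
        (fun s => ∑ a : Fin n, ∑ b : Fin n, S (q s) a b * q' s a * q' s b)
        (∑ a : Fin n, ∑ b : Fin n,
          ((fderiv ℝ (fun y => S y a b) (q t) (q' t) * q' t a
              + S (q t) a b * q'' t a) * q' t b
            + S (q t) a b * q' t a * q'' t b)) t :=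
      HasDerivAt.fun_sum fun a _ => HasDerivAt.fun_sum fun b _ =>
        ((hSt t a b).mul (hq'a t a)).mul (hq'a t b)
    have hval : (∑ a : Fin n, ∑ b : Fin n,
          ((fderiv ℝ (fun y => S y a b) (q t) (q' t) * q' t a
              + S (q t) a b * q'' t a) * q' t b
            + S (q t) a b * q' t a * q'' t b))
        = (b₀ + b₁*t) * (lam^3/b₁) * ∑ a : Fin n, L (q t) a * q' t a := by
      have expand : ∀ a b : Fin n,
          ((fderiv ℝ (fun y => S y a b) (q t) (q' t) * q' t a
              + S (q t) a b * q'' t a) * q' t b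
            + S (q t) a b * q' t a * q'' t b)
          = fderiv ℝ (fun y => S y a b) (q t) (q' t) * q' t a * q' t b
            + (-(b₀ + b₁*t)) * (S (q t) a b * Q (q t) a * q' t b
                + S (q t) a b * q' t a * Q (q t) b) := by
        intro a b
        rw [hq'' t a, hq'' t b]; ring
      rw [sum_congr2 _ _ expand, sum2_add, hKill t, zero_add]
      -- remaining: ΣΣ -(w) * (S Qa q'b + S q'a Qb)
      have u1 : (∑ a : Fin n, ∑ b : Fin n, S (q t) a b * q' t a * Q (q t) b)
          = -(lam^3/(2*b₁)) * ∑ a : Fin n, L (q t) a * q' t a := by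
        rw [Finset.mul_sum]
        refine Finset.sum_congr rfl fun a _ => ?_
        have : (∑ b : Fin n, S (q t) a b * q' t a * Q (q t) b)
            = q' t a * ∑ b : Fin n, S (q t) a b * Q (q t) b := by
          rw [Finset.mul_sum]
          exact Finset.sum_congr rfl fun b _ => by ring
        rw [this, hvec' (q t) a]
        ring
      have u2 : (∑ a : Fin n, ∑ b : Fin n, S (q t) a b * Q (q t) a * q' t b)
          = -(lam^3/(2*b₁)) * ∑ a : Fin n, L (q t) a * q' t a := by
        have swap : (∑ a : Fin n, ∑ b : Fin n, S (q t) a b * Q (q t) a * q' t b)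
            = ∑ a : Fin n, ∑ b : Fin n, S (q t) a b * q' t a * Q (q t) b := by
          rw [sum_swap2 (fun a b => S (q t) a b * Q (q t) a * q' t b)]
          exact sum_congr2 _ _ fun a b => by rw [hSsymm (q t) b a]; ring
        rw [swap, u1]
      have split : (∑ a : Fin n, ∑ b : Fin n,
            (-(b₀ + b₁*t)) * (S (q t) a b * Q (q t) a * q' t b
              + S (q t) a b * q' t a * Q (q t) b))
          = (-(b₀ + b₁*t)) * ((∑ a : Fin n, ∑ b : Fin n, S (q t) a b * Q (q t) a * q' t b)
              + ∑ a : Fin n, ∑ b : Fin n, S (q t) a b * q' t a * Q (q t) b) := by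
        rw [← sum2_add]
        rw [Finset.mul_sum]
        refine Finset.sum_congr rfl fun a _ => ?_
        rw [Finset.mul_sum]
      rw [split, u1, u2]
      field_simp
      ring
    rw [← hval]
    exact h0
  -- assemble
  intro t₁ t₂
  have he : ∀ t : ℝ, HasDerivAt (fun s => Real.exp (lam * s))
      (Real.exp (lam * t) * lam) t := by
    intro t
    have h := ((hasDerivAt_id t).const_mul lam).exp
    simpa using h
  have hF : ∀ t, HasDerivAt (fun s =>
      -Real.exp (lam * s) * (∑ a : Fin n, ∑ b : Fin n, S (q s) a b * q' s a * q' s b)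
        + lam * Real.exp (lam * s) * (∑ a : Fin n, L (q s) a * q' s a)
        + (b₀ - b₁ / lam) * Real.exp (lam * s) * (∑ a : Fin n, L (q s) a * Q (q s) a)
        + b₁ * s * Real.exp (lam * s) * (∑ a : Fin n, L (q s) a * Q (q s) a)) 0 t := by
    intro t
    have T1 := ((he t).neg).mul (hA t)
    have T2 := ((he t).const_mul lam).mul (hB t)
    have T3 := ((he t).const_mul (b₀ - b₁ / lam)).mul (hC t)
    have T4 := (((hasDerivAt_id t).const_mul b₁).mul (he t)).mul (hC t)
    have H := ((T1.add T2).add T3).add T4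
    convert H using 1
    · rfl
    · rfl
    · funext s
      simp only [Pi.mul_apply, Pi.neg_apply, Pi.add_apply, id] <;> ring
    simp only [Pi.mul_apply, Pi.neg_apply, id]
    field_simp
    ring
  exact is_const_of_deriv_eq_zero (fun t => (hF t).differentiableAt)
    (fun t => (hF t).deriv) t₁ t₂
end

section
/- Let φ : ℝ → ℝ be continuous, let Φ be an antiderivative of φ (Φ' = φ), let ρ : ℝ → ℝ be twice differentiable with ρ(t) > 0 for all t, and let θ : ℝ → ℝ be differentiable with θ'(t) = ρ(t)^(−2)·e^{Φ(t)}. Define ω(t) := −ρ''(t)/ρ(t) + φ(t)·ρ'(t)/ρ(t) + ρ(t)^(−4)·e^{2Φ(t)}. Then for any real constants A, B, the function x(t) := ρ(t)·( A·sin(θ(t)) + B·cos(θ(t)) ) satisfies x''(t) = −ω(t)·x(t) + φ(t)·x'(t) for all t. -/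
/-- For the damped 1d oscillator `ẍ = −ω(t)x + φ(t)ẋ` with
`ω = −ρ''/ρ + φρ'/ρ + ρ⁻⁴e^{2Φ}` and `θ' = ρ⁻²e^{Φ}`, the function
`x = ρ(A sin θ + B cos θ)` is a solution. -/
theorem damped_oscillator_general_solution (φ Φ : ℝ → ℝ)
    (hφ : Continuous φ)
    (hΦ : ∀ t, HasDerivAt Φ (φ t) t)
    (ρ ρ' ρ'' : ℝ → ℝ)
    (hρ : ∀ t, HasDerivAt ρ (ρ' t) t)
    (hρ' : ∀ t, HasDerivAt ρ' (ρ'' t) t)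
    (hρpos : ∀ t, 0 < ρ t)
    (θ : ℝ → ℝ)
    (hθ : ∀ t, HasDerivAt θ ((ρ t) ^ (-2 : ℝ) * Real.exp (Φ t)) t)
    (ω : ℝ → ℝ)
    (hω : ∀ t, ω t = -(ρ'' t / ρ t) + φ t * (ρ' t / ρ t)
      + (ρ t) ^ (-4 : ℝ) * Real.exp (2 * Φ t))
    (A B : ℝ) :
    ∀ t, deriv (deriv fun s => ρ s * (A * Real.sin (θ s) + B * Real.cos (θ s))) t
      = -(ω t) * (ρ t * (A * Real.sin (θ t) + B * Real.cos (θ t)))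
        + φ t * deriv (fun s => ρ s * (A * Real.sin (θ s) + B * Real.cos (θ s))) t := by
  have hρne : ∀ s, ρ s ≠ 0 := fun s => (hρpos s).ne'
  have hrpow2 : ∀ s, (ρ s) ^ (-2 : ℝ) = ((ρ s) ^ 2)⁻¹ := fun s => by
    rw [show (-2 : ℝ) = -((2 : ℕ) : ℝ) by norm_num,
      Real.rpow_neg (hρpos s).le, Real.rpow_natCast]
  have hrpow4 : ∀ s, (ρ s) ^ (-4 : ℝ) = ((ρ s) ^ 4)⁻¹ := fun s => by
    rw [show (-4 : ℝ) = -((4 : ℕ) : ℝ) by norm_num,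
      Real.rpow_neg (hρpos s).le, Real.rpow_natCast]
  set θd : ℝ → ℝ := fun s => ((ρ s) ^ 2)⁻¹ * Real.exp (Φ s) with hθddef
  have hθ' : ∀ s, HasDerivAt θ (θd s) s := fun s => by
    have := hθ s; rwa [hrpow2 s] at this
  have hθdderiv : ∀ s, HasDerivAt θd
      ((-(2 * ρ s * ρ' s) / ((ρ s) ^ 2) ^ 2) * Real.exp (Φ s)
        + ((ρ s) ^ 2)⁻¹ * (Real.exp (Φ s) * φ s)) s := by
    intro s
    have hsq : HasDerivAt (fun u => (ρ u) ^ 2) (2 * ρ s * ρ' s) s := by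
      have := (hρ s).pow 2
      exact this.congr_deriv (by norm_num)
    have h1 : HasDerivAt (fun u => ((ρ u) ^ 2)⁻¹)
        (-(2 * ρ s * ρ' s) / ((ρ s) ^ 2) ^ 2) s :=
      hsq.inv (pow_ne_zero 2 (hρne s))
    have h2 : HasDerivAt (fun u => Real.exp (Φ u)) (Real.exp (Φ s) * φ s) s :=
      (Real.hasDerivAt_exp (Φ s)).comp s (hΦ s)
    exact h1.mul h2
  set S : ℝ → ℝ := fun s => A * Real.sin (θ s) + B * Real.cos (θ s) with hSdef
  set C : ℝ → ℝ := fun s => A * Real.cos (θ s) - B * Real.sin (θ s) with hCdef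
  have hS : ∀ s, HasDerivAt S (C s * θd s) s := by
    intro s
    have h1 : HasDerivAt (fun u => Real.sin (θ u)) (Real.cos (θ s) * θd s) s :=
      (Real.hasDerivAt_sin (θ s)).comp s (hθ' s)
    have h2 : HasDerivAt (fun u => Real.cos (θ u)) (-Real.sin (θ s) * θd s) s :=
      (Real.hasDerivAt_cos (θ s)).comp s (hθ' s)
    have := (h1.const_mul A).add (h2.const_mul B)
    exact this.congr_deriv (by show A * (Real.cos (θ s) * θd s) + B * (-Real.sin (θ s) * θd s) = (A * Real.cos (θ s) - B * Real.sin (θ s)) * θd s; ring)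
  have hC : ∀ s, HasDerivAt C (-(S s) * θd s) s := by
    intro s
    have h1 : HasDerivAt (fun u => Real.cos (θ u)) (-Real.sin (θ s) * θd s) s :=
      (Real.hasDerivAt_cos (θ s)).comp s (hθ' s)
    have h2 : HasDerivAt (fun u => Real.sin (θ u)) (Real.cos (θ s) * θd s) s :=
      (Real.hasDerivAt_sin (θ s)).comp s (hθ' s)
    have := (h1.const_mul A).sub (h2.const_mul B)
    exact this.congr_deriv (by show A * (-Real.sin (θ s) * θd s) - B * (Real.cos (θ s) * θd s) = -(A * Real.sin (θ s) + B * Real.cos (θ s)) * θd s; ring)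
  set f1 : ℝ → ℝ := fun s => ρ' s * S s + ρ s * (C s * θd s) with hf1def
  have hx1 : ∀ s, HasDerivAt (fun u => ρ u * S u) (f1 s) s := fun s => (hρ s).mul (hS s)
  have hderiv1 : deriv (fun s => ρ s * S s) = f1 := funext fun s => (hx1 s).deriv
  have hx2 : ∀ s, HasDerivAt f1
      (ρ'' s * S s + ρ' s * (C s * θd s)
        + (ρ' s * (C s * θd s)
          + ρ s * ((-(S s) * θd s) * θd s
            + C s * ((-(2 * ρ s * ρ' s) / ((ρ s) ^ 2) ^ 2) * Real.exp (Φ s)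
              + ((ρ s) ^ 2)⁻¹ * (Real.exp (Φ s) * φ s))))) s := fun s =>
    ((hρ' s).mul (hS s)).add ((hρ s).mul ((hC s).mul (hθdderiv s)))
  intro t
  rw [show (fun s => ρ s * (A * Real.sin (θ s) + B * Real.cos (θ s))) = fun s => ρ s * S s
        from rfl,
      hderiv1, (hx2 t).deriv, hω t, hrpow4 t]
  have hexp2 : Real.exp (2 * Φ t) = Real.exp (Φ t) * Real.exp (Φ t) := by
    rw [two_mul, Real.exp_add]
  rw [hexp2, hf1def, hθddef]
  simp only [hSdef, hCdef]
  have h := hρne t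
  field_simp
  ring
end

section
/- Let μ be a real constant, φ, ω : ℝ → ℝ with φ continuous, and let Φ be an antiderivative of φ. Let x : ℝ → ℝ be twice differentiable with x(t) > 0 for all t, satisfying x''(t) = −ω(t)·x(t)^μ + φ(t)·x'(t). Let τ : ℝ → ℝ be differentiable with τ'(s) = e^{−Φ(τ(s))} for all s. Then y := x ∘ τ is twice differentiable and satisfies y''(s) = −ω(τ(s))·e^{−2Φ(τ(s))}·y(s)^μ for all s. -/
/-- Under the reparameterization `τ' = e^{−Φ∘τ}`, the damped non-linear equation
`ẍ = −ω(t)x^μ + φ(t)ẋ` becomes `y'' = −ω(τ(s))e^{−2Φ(τ(s))} y^μ` for `y = x ∘ τ`. -/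
theorem damping_absorbed_by_reparameterization (μ : ℝ) (φ ω : ℝ → ℝ)
    (hφ : Continuous φ) (Φ : ℝ → ℝ)
    (hΦ : ∀ t, HasDerivAt Φ (φ t) t)
    (x x' x'' : ℝ → ℝ)
    (hx : ∀ t, HasDerivAt x (x' t) t)
    (hx' : ∀ t, HasDerivAt x' (x'' t) t)
    (hxpos : ∀ t, 0 < x t)
    (heom : ∀ t, x'' t = -(ω t * x t ^ μ) + φ t * x' t)
    (τ : ℝ → ℝ)
    (hτ : ∀ s, HasDerivAt τ (Real.exp (-Φ (τ s))) s) :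
    ∃ y' y'' : ℝ → ℝ,
      (∀ s, HasDerivAt (x ∘ τ) (y' s) s) ∧
      (∀ s, HasDerivAt y' (y'' s) s) ∧
      (∀ s, y'' s = -(ω (τ s) * Real.exp (-(2 * Φ (τ s))) * (x ∘ τ) s ^ μ)) := by
  refine ⟨fun s => x' (τ s) * Real.exp (-Φ (τ s)),
    fun s => -(ω (τ s) * Real.exp (-(2 * Φ (τ s))) * (x ∘ τ) s ^ μ), ?_, ?_, fun s => rfl⟩
  · intro s
    exact (hx (τ s)).comp s (hτ s)
  · intro s
    -- derivative of t ↦ x' t * exp (-Φ t) at τ s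
    have hg : HasDerivAt (fun t => x' t * Real.exp (-Φ t))
        (x'' (τ s) * Real.exp (-Φ (τ s)) +
          x' (τ s) * (Real.exp (-Φ (τ s)) * -(φ (τ s)))) (τ s) := by
      have hΦ' : HasDerivAt (fun t => Real.exp (-Φ t))
          (Real.exp (-Φ (τ s)) * -(φ (τ s))) (τ s) :=
        (Real.hasDerivAt_exp _).comp _ ((hΦ (τ s)).neg)
      exact (hx' (τ s)).mul hΦ'
    have h := hg.comp s (hτ s)
    convert h using 1
    case e'_4 => rfl
    case e'_5 => rfl
    case e'_8 => rfl
    have : x'' (τ s) = -(ω (τ s) * x (τ s) ^ μ) + φ (τ s) * x' (τ s) := heom (τ s)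
    simp only [Function.comp_apply, this]
    rw [show -(2 * Φ (τ s)) = -Φ (τ s) + -Φ (τ s) by ring, Real.exp_add]
    ring
end

section
/- Let μ ≠ −1 be a real constant, c₁, c₂, c₃ real constants, and set P(s) := c₁ + c₂s + c₃s², assumed positive for all s in an open interval J. Let x : J → ℝ be twice differentiable with x(s) > 0 on J, satisfying x''(s) = −P(s)^(−(μ+3)/2)·x(s)^μ. Then the quantity I(s) := P(s)·x'(s)² − (c₂ + 2c₃s)·x(s)·x'(s) + (2/(μ+1))·P(s)^(−(μ+1)/2)·x(s)^{μ+1} + c₃·x(s)² is constant on J. -/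
/-- The quadratic first integral of `x'' = −(c₁ + c₂ s + c₃ s²)^(−(μ+3)/2) x^μ`,
`μ ≠ −1`, on an open interval where `c₁ + c₂ s + c₃ s² > 0`. -/
theorem nonlinear_QFI (μ : ℝ) (hμ : μ ≠ -1) (c₁ c₂ c₃ : ℝ)
    (P : ℝ → ℝ) (hP : ∀ s, P s = c₁ + c₂ * s + c₃ * s ^ 2) (a b : ℝ)
    (hPpos : ∀ s ∈ Set.Ioo a b, 0 < P s)
    (x x' x'' : ℝ → ℝ)
    (hx : ∀ s ∈ Set.Ioo a b, HasDerivAt x (x' s) s)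
    (hx' : ∀ s ∈ Set.Ioo a b, HasDerivAt x' (x'' s) s)
    (hxpos : ∀ s ∈ Set.Ioo a b, 0 < x s)
    (heom : ∀ s ∈ Set.Ioo a b, x'' s = -(P s ^ (-(μ + 3) / 2) * x s ^ μ)) :
    ∀ s₁ ∈ Set.Ioo a b, ∀ s₂ ∈ Set.Ioo a b,
      P s₁ * (x' s₁) ^ 2 - (c₂ + 2 * c₃ * s₁) * x s₁ * x' s₁
        + (2 / (μ + 1)) * P s₁ ^ (-(μ + 1) / 2) * x s₁ ^ (μ + 1) + c₃ * (x s₁) ^ 2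
      = P s₂ * (x' s₂) ^ 2 - (c₂ + 2 * c₃ * s₂) * x s₂ * x' s₂
        + (2 / (μ + 1)) * P s₂ ^ (-(μ + 1) / 2) * x s₂ ^ (μ + 1) + c₃ * (x s₂) ^ 2 := by
  have hμ1 : μ + 1 ≠ 0 := by
    intro h; apply hμ; linarith
  intro s₁ hs₁ s₂ hs₂
  set F : ℝ → ℝ := fun s =>
    P s * (x' s) ^ 2 - (c₂ + 2 * c₃ * s) * x s * x' s
      + (2 / (μ + 1)) * P s ^ (-(μ + 1) / 2) * x s ^ (μ + 1) + c₃ * (x s) ^ 2 with hF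
  have key : ∀ s ∈ Set.Ioo a b, HasDerivAt F 0 s := by
    intro s hs
    have hPs : 0 < P s := hPpos s hs
    have hxs : 0 < x s := hxpos s hs
    have hxd := hx s hs
    have hx'd := hx' s hs
    have hPd : HasDerivAt P (c₂ + 2 * c₃ * s) s := by
      have h := ((hasDerivAt_const s c₁).add ((hasDerivAt_id s).const_mul c₂)).add
        ((hasDerivAt_pow 2 s).const_mul c₃)
      have hfe : (fun t : ℝ => c₁ + c₂ * t + c₃ * t ^ 2) = P := by
        funext t; rw [hP t]
      simp only [id_eq] at h
      rw [show (((fun x => c₁) + fun y => c₂ * y) + fun y => c₃ * y ^ 2 : ℝ → ℝ) = P from by rw [← hfe]; rfl] at h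
      refine h.congr_deriv ?_
      rw [show (2:ℕ) - 1 = 1 from rfl, pow_one]
      push_cast; ring
    have hQ : HasDerivAt (fun t : ℝ => c₂ + 2 * c₃ * t) (2 * c₃) s := by
      have h := (hasDerivAt_const s c₂).add ((hasDerivAt_id s).const_mul (2 * c₃))
      exact h.congr_deriv (by ring)
    have hA : HasDerivAt (fun t => P t ^ (-(μ + 1) / 2))
        ((c₂ + 2 * c₃ * s) * (-(μ + 1) / 2) * P s ^ (-(μ + 1) / 2 - 1)) s :=
      hPd.rpow_const (Or.inl hPs.ne')
    have hB : HasDerivAt (fun t => x t ^ (μ + 1))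
        (x' s * (μ + 1) * x s ^ (μ + 1 - 1)) s :=
      hxd.rpow_const (Or.inl hxs.ne')
    have hFd := (((hPd.mul (hx'd.pow 2)).sub ((hQ.mul hxd).mul hx'd)).add
      ((hA.const_mul (2 / (μ + 1))).mul hB)).add ((hxd.pow 2).const_mul c₃)
    refine hFd.congr_deriv (Eq.symm ?_)
    simp only [Pi.pow_apply, Pi.mul_apply]
    have e1 : P s ^ (-(μ + 1) / 2 - 1) = P s ^ (-(μ + 3) / 2) := by
      congr 1; ring
    have e2 : x s ^ (μ + 1 - 1) = x s ^ μ := by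
      congr 1; ring
    have e3 : P s ^ (-(μ + 1) / 2) = P s * P s ^ (-(μ + 3) / 2) := by
      rw [show (-(μ + 1) / 2 : ℝ) = 1 + -(μ + 3) / 2 by ring, Real.rpow_add hPs,
        Real.rpow_one]
    have e4 : x s ^ (μ + 1) = x s * x s ^ μ := by
      rw [show (μ + 1 : ℝ) = 1 + μ by ring, Real.rpow_add hxs, Real.rpow_one]
    rw [heom s hs, e1, e2, e3, e4]
    push_cast
    field_simp
    ring
  have hconst : ‖F s₂ - F s₁‖ ≤ 0 * ‖s₂ - s₁‖ := by
    refine Convex.norm_image_sub_le_of_norm_hasDerivWithin_le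
      (f' := fun _ => (0 : ℝ)) (fun t ht => (key t ht).hasDerivWithinAt)
      (fun t ht => by simp) (convex_Ioo a b) hs₁ hs₂
  have : F s₁ = F s₂ := by
    have h0 : ‖F s₂ - F s₁‖ ≤ 0 := by simpa using hconst
    have := norm_nonneg (F s₂ - F s₁)
    have : F s₂ - F s₁ = 0 := by
      have := le_antisymm h0 (norm_nonneg _)
      exact norm_eq_zero.mp this
    linarith
  simpa [hF] using this
end

section
/- Let μ ≠ −1 be a real constant, c₁, c₂, c₃ real constants, and φ : ℝ → ℝ continuous. Let Φ be an antiderivative of φ and S an antiderivative of e^Φ (S' = e^Φ). Set P(t) := c₁ + c₂·S(t) + c₃·S(t)², assumed positive for all t in an open interval J, and define ω(t) := P(t)^(−(μ+3)/2)·e^{2Φ(t)}. Let x : J → ℝ be twice differentiable with x(t) > 0 on J, satisfying x''(t) = −ω(t)·x(t)^μ + φ(t)·x'(t). Then the quantity I(t) := P(t)·e^{−2Φ(t)}·x'(t)² − (c₂ + 2c₃·S(t))·e^{−Φ(t)}·x(t)·x'(t) + (2/(μ+1))·P(t)^(−(μ+1)/2)·x(t)^{μ+1} + c₃·x(t)²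 is constant on J. -/
/-- The quadratic first integral of the damped non-linear equation
`ẍ = −ω(t)x^μ + φ(t)ẋ`, `μ ≠ −1`, for the integrable family
`ω = (c₁ + c₂S + c₃S²)^(−(μ+3)/2) e^{2Φ}` where `Φ' = φ` and `S' = e^Φ`. -/
theorem damped_nonlinear_QFI (μ : ℝ) (hμ : μ ≠ -1) (c₁ c₂ c₃ : ℝ)
    (φ : ℝ → ℝ) (hφ : Continuous φ)
    (Φ : ℝ → ℝ) (hΦ : ∀ t, HasDerivAt Φ (φ t) t)
    (S : ℝ → ℝ) (hS : ∀ t, HasDerivAt S (Real.exp (Φ t)) t)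
    (P : ℝ → ℝ) (hP : ∀ t, P t = c₁ + c₂ * S t + c₃ * (S t) ^ 2) (a b : ℝ)
    (hPpos : ∀ t ∈ Set.Ioo a b, 0 < P t)
    (ω : ℝ → ℝ)
    (hω : ∀ t, ω t = P t ^ (-(μ + 3) / 2) * Real.exp (2 * Φ t))
    (x x' x'' : ℝ → ℝ)
    (hx : ∀ t ∈ Set.Ioo a b, HasDerivAt x (x' t) t)
    (hx' : ∀ t ∈ Set.Ioo a b, HasDerivAt x' (x'' t) t)
    (hxpos : ∀ t ∈ Set.Ioo a b, 0 < x t)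
    (heom : ∀ t ∈ Set.Ioo a b, x'' t = -(ω t * x t ^ μ) + φ t * x' t) :
    ∀ t₁ ∈ Set.Ioo a b, ∀ t₂ ∈ Set.Ioo a b,
      P t₁ * Real.exp (-(2 * Φ t₁)) * (x' t₁) ^ 2
        - (c₂ + 2 * c₃ * S t₁) * Real.exp (-Φ t₁) * x t₁ * x' t₁
        + (2 / (μ + 1)) * P t₁ ^ (-(μ + 1) / 2) * x t₁ ^ (μ + 1) + c₃ * (x t₁) ^ 2
      = P t₂ * Real.exp (-(2 * Φ t₂)) * (x' t₂) ^ 2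
        - (c₂ + 2 * c₃ * S t₂) * Real.exp (-Φ t₂) * x t₂ * x' t₂
        + (2 / (μ + 1)) * P t₂ ^ (-(μ + 1) / 2) * x t₂ ^ (μ + 1) + c₃ * (x t₂) ^ 2 := by
  have hμ1 : μ + 1 ≠ 0 := fun h => hμ (by linarith)
  set F : ℝ → ℝ := fun t =>
      P t * Real.exp (-(2 * Φ t)) * (x' t) ^ 2
        - (c₂ + 2 * c₃ * S t) * Real.exp (-Φ t) * x t * x' t
        + (2 / (μ + 1)) * P t ^ (-(μ + 1) / 2) * x t ^ (μ + 1) + c₃ * (x t) ^ 2 with hFdef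
  have key : ∀ t ∈ Set.Ioo a b, HasDerivAt F 0 t := by
    intro t ht
    have hPt := hPpos t ht
    have hXpos := hxpos t ht
    have hXne : x t ≠ 0 := hXpos.ne'
    have hX := hx t ht
    have hX' := hx' t ht
    have hE : Real.exp (Φ t) ≠ 0 := Real.exp_ne_zero _
    have hPd : HasDerivAt P ((c₂ + 2 * c₃ * S t) * Real.exp (Φ t)) t := by
      have hfe : P = fun s => c₁ + c₂ * S s + c₃ * (S s) ^ 2 := funext hP
      have h0 : HasDerivAt (fun s => c₁ + c₂ * S s + c₃ * (S s) ^ 2)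
          (c₂ * Real.exp (Φ t) + c₃ * (2 * S t ^ 1 * Real.exp (Φ t))) t :=
        (((hS t).const_mul c₂).const_add c₁).add (((hS t).pow 2).const_mul c₃)
      rw [hfe]
      convert h0 using 1
      ring
    have hbig :=
      ((((hPd.mul (((hΦ t).const_mul 2).neg.exp)).mul (hX'.pow 2)).sub
        ((((((hS t).const_mul (2 * c₃)).const_add c₂).mul ((hΦ t).neg.exp)).mul hX).mul hX')).add
        (((hPd.rpow_const (p := -(μ + 1) / 2) (Or.inl hPt.ne')).const_mul (2 / (μ + 1))).mul
          (hX.rpow_const (p := μ + 1) (Or.inl hXne)))).add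
        ((hX.pow 2).const_mul c₃)
    have hF0 : HasDerivAt F 0 t := by
      convert hbig using 1
      case e'_4 => rfl
      case e'_5 => rfl
      case e'_8 => rfl
      rw [heom t ht, hω t]
      have e1 : P t ^ (-(μ + 1) / 2 - 1) = P t ^ (-(μ + 1) / 2) / P t := by
        rw [Real.rpow_sub hPt, Real.rpow_one]
      have e2 : P t ^ (-(μ + 3) / 2) = P t ^ (-(μ + 1) / 2) / P t := by
        rw [show -(μ + 3) / 2 = -(μ + 1) / 2 - 1 by ring, Real.rpow_sub hPt, Real.rpow_one]
      have e3 : x t ^ (μ + 1) = x t ^ μ * x t := Real.rpow_add_one hXne μ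
      have e4 : x t ^ (μ + 1 - 1) = x t ^ μ := by rw [show μ + 1 - 1 = μ by ring]
      have h2Φ : Real.exp (2 * Φ t) = Real.exp (Φ t) ^ 2 := by
        rw [two_mul, Real.exp_add, sq]
      have hnΦ : Real.exp (-Φ t) = (Real.exp (Φ t))⁻¹ := Real.exp_neg _
      have hn2Φ : Real.exp (-(2 * Φ t)) = (Real.exp (Φ t) ^ 2)⁻¹ := by
        rw [Real.exp_neg, h2Φ]
      simp only [Pi.mul_apply, Pi.neg_apply, Pi.pow_apply]
      rw [e1, e2, e3, e4, h2Φ, hnΦ, hn2Φ]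
      field_simp
      ring
    exact hF0
  have main : ∀ t₁ ∈ Set.Ioo a b, ∀ t₂ ∈ Set.Ioo a b, t₁ ≤ t₂ → F t₂ = F t₁ := by
    intro t₁ h₁ t₂ h₂ hle
    have hsub : Set.Icc t₁ t₂ ⊆ Set.Ioo a b := fun s hs =>
      ⟨lt_of_lt_of_le h₁.1 hs.1, lt_of_le_of_lt hs.2 h₂.2⟩
    exact constant_of_has_deriv_right_zero
      (fun s hs => (key s (hsub hs)).continuousAt.continuousWithinAt)
      (fun s hs => (key s (hsub ⟨hs.1, le_of_lt hs.2⟩)).hasDerivWithinAt)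
      t₂ ⟨hle, le_refl _⟩
  intro t₁ h₁ t₂ h₂
  rcases le_total t₁ t₂ with h | h
  · exact (main t₁ h₁ t₂ h₂ h).symm
  · exact main t₂ h₂ t₁ h₁ h
end

section
/- Let c₄, c₅ be real constants and let K : ℝ → ℝ be three times differentiable with K(s) > 0 for all s in an open interval J, satisfying K'''(s) = 2(c₄ + c₅s)·K(s)^(−5/2). Let x : J → ℝ be twice differentiable satisfying x''(s) = −K(s)^(−5/2)·x(s)². Then the quantity I(s) := K(s)·x'(s)² − K'(s)·x(s)·x'(s) + (c₄ + c₅s)·x'(s) + (2/3)·K(s)^(−3/2)·x(s)³ + (K''(s)/2)·x(s)² − c₅·x(s) is constant on J. -/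
/-- The quadratic first integral of `x'' = −K^(−5/2) x²` where
`K''' = 2(c₄ + c₅ s)K^(−5/2)` on an open interval with `K > 0`. -/
theorem mu_two_QFI (c₄ c₅ : ℝ) (a b : ℝ)
    (K K' K'' K''' : ℝ → ℝ)
    (hK : ∀ s ∈ Set.Ioo a b, HasDerivAt K (K' s) s)
    (hK' : ∀ s ∈ Set.Ioo a b, HasDerivAt K' (K'' s) s)
    (hK'' : ∀ s ∈ Set.Ioo a b, HasDerivAt K'' (K''' s) s)
    (hKpos : ∀ s ∈ Set.Ioo a b, 0 < K s)
    (hKode : ∀ s ∈ Set.Ioo a b, K''' s = 2 * (c₄ + c₅ * s) * K s ^ (-(5 : ℝ) / 2))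
    (x x' x'' : ℝ → ℝ)
    (hx : ∀ s ∈ Set.Ioo a b, HasDerivAt x (x' s) s)
    (hx' : ∀ s ∈ Set.Ioo a b, HasDerivAt x' (x'' s) s)
    (heom : ∀ s ∈ Set.Ioo a b, x'' s = -(K s ^ (-(5 : ℝ) / 2) * (x s) ^ 2)) :
    ∀ s₁ ∈ Set.Ioo a b, ∀ s₂ ∈ Set.Ioo a b,
      K s₁ * (x' s₁) ^ 2 - K' s₁ * x s₁ * x' s₁ + (c₄ + c₅ * s₁) * x' s₁
        + (2 / 3) * K s₁ ^ (-(3 : ℝ) / 2) * (x s₁) ^ 3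
        + (K'' s₁ / 2) * (x s₁) ^ 2 - c₅ * x s₁
      = K s₂ * (x' s₂) ^ 2 - K' s₂ * x s₂ * x' s₂ + (c₄ + c₅ * s₂) * x' s₂
        + (2 / 3) * K s₂ ^ (-(3 : ℝ) / 2) * (x s₂) ^ 3
        + (K'' s₂ / 2) * (x s₂) ^ 2 - c₅ * x s₂ := by
  set I : ℝ → ℝ := fun s =>
    K s * (x' s) ^ 2 - K' s * x s * x' s + (c₄ + c₅ * s) * x' s
      + (2 / 3) * K s ^ (-(3 : ℝ) / 2) * (x s) ^ 3
      + (K'' s / 2) * (x s) ^ 2 - c₅ * x s with hIdef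
  have hI : ∀ s ∈ Set.Ioo a b, HasDerivAt I 0 s := by
    intro s hs
    have hKs := hK s hs
    have hK's := hK' s hs
    have hK''s := hK'' s hs
    have hxs := hx s hs
    have hx's := hx' s hs
    have hKne : K s ≠ 0 := (hKpos s hs).ne'
    have h1 := hKs.mul (hx's.pow 2)
    have h2 := (hK's.mul hxs).mul hx's
    have hlin : HasDerivAt (fun t : ℝ => c₄ + c₅ * t) c₅ s := by
      simpa using ((hasDerivAt_id s).const_mul c₅).const_add c₄
    have h3 := hlin.mul hx's
    have hrp : HasDerivAt (fun t => K t ^ (-(3 : ℝ) / 2))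
        (K' s * (-(3 : ℝ) / 2) * K s ^ (-(3 : ℝ) / 2 - 1)) s :=
      hKs.rpow_const (Or.inl hKne)
    have h4 := (hrp.const_mul (2 / 3 : ℝ)).mul (hxs.pow 3)
    have h5 := (hK''s.div_const 2).mul (hxs.pow 2)
    have h6 := hxs.const_mul c₅
    have hD := ((((h1.sub h2).add h3).add h4).add h5).sub h6
    have E1 : K s ^ (-(3 : ℝ) / 2 - 1) = K s ^ (-(5 : ℝ) / 2) := by norm_num
    have E2 : K s * K s ^ (-(5 : ℝ) / 2) = K s ^ (-(3 : ℝ) / 2) := by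
      nth_rewrite 1 [← Real.rpow_one (K s)]
      rw [← Real.rpow_add (hKpos s hs)]
      norm_num
    refine hD.congr_deriv ?_
    symm
    rw [heom s hs, hKode s hs, E1]
    simp only [Pi.mul_apply, Pi.pow_apply]
    linear_combination (2 * x s ^ 2 * x' s) * E2
  have hdiff : DifferentiableOn ℝ I (Set.Ioo a b) := fun s hs =>
    (hI s hs).differentiableAt.differentiableWithinAt
  have hfd : ∀ s ∈ Set.Ioo a b, fderivWithin ℝ I (Set.Ioo a b) s = 0 := by
    intro s hs
    rw [fderivWithin_of_isOpen isOpen_Ioo hs, (hI s hs).hasFDerivAt.fderiv]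
    ext
    simp
  intro s₁ hs₁ s₂ hs₂
  exact (convex_Ioo a b).is_const_of_fderivWithin_eq_zero hdiff hfd hs₁ hs₂
end

section
/- Let c₁, c₂, c₃ be real constants and set K₁₁(s) := c₁ + c₂s + c₃s². Let ω̄ : ℝ → ℝ be differentiable and let b₁ : ℝ → ℝ be twice differentiable satisfying b₁''(s) = 2ω̄'(s)·K₁₁(s) + 3ω̄(s)·K₁₁'(s) for all s. Let B be an antiderivative of b₁·ω̄ (B' = b₁·ω̄). Let x : ℝ → ℝ be twice differentiable satisfying x''(s) = −ω̄(s). Then the quantity I(s) := K₁₁(s)·x'(s)² − K₁₁'(s)·x(s)·x'(s) + b₁(s)·x'(s) + c₃·x(s)² + 2ω̄(s)·K₁₁(s)·x(s) − b₁'(s)·x(s) + B(s) is constant in s. -/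
/-- The quadratic first integral of `x'' = −ω̄(s)` (the case `μ = 0`), for arbitrary
differentiable `ω̄` with the compatibility condition `b₁'' = 2ω̄'K₁₁ + 3ω̄K₁₁'`,
`K₁₁(s) = c₁ + c₂ s + c₃ s²`, and `B' = b₁ ω̄`. -/
theorem mu_zero_QFI (c₁ c₂ c₃ : ℝ)
    (ω ω' : ℝ → ℝ) (hω : ∀ s, HasDerivAt ω (ω' s) s)
    (b₁ b₁' b₁'' : ℝ → ℝ)
    (hb₁ : ∀ s, HasDerivAt b₁ (b₁' s) s)
    (hb₁' : ∀ s, HasDerivAt b₁' (b₁'' s) s)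
    (hcomp : ∀ s, b₁'' s = 2 * ω' s * (c₁ + c₂ * s + c₃ * s ^ 2)
      + 3 * ω s * (c₂ + 2 * c₃ * s))
    (B : ℝ → ℝ) (hB : ∀ s, HasDerivAt B (b₁ s * ω s) s)
    (x x' x'' : ℝ → ℝ)
    (hx : ∀ s, HasDerivAt x (x' s) s)
    (hx' : ∀ s, HasDerivAt x' (x'' s) s)
    (heom : ∀ s, x'' s = -ω s) :
    ∀ s₁ s₂,
      (c₁ + c₂ * s₁ + c₃ * s₁ ^ 2) * (x' s₁) ^ 2
        - (c₂ + 2 * c₃ * s₁) * x s₁ * x' s₁ + b₁ s₁ * x' s₁ + c₃ * (x s₁) ^ 2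
        + 2 * ω s₁ * (c₁ + c₂ * s₁ + c₃ * s₁ ^ 2) * x s₁ - b₁' s₁ * x s₁ + B s₁
      = (c₁ + c₂ * s₂ + c₃ * s₂ ^ 2) * (x' s₂) ^ 2
        - (c₂ + 2 * c₃ * s₂) * x s₂ * x' s₂ + b₁ s₂ * x' s₂ + c₃ * (x s₂) ^ 2
        + 2 * ω s₂ * (c₁ + c₂ * s₂ + c₃ * s₂ ^ 2) * x s₂ - b₁' s₂ * x s₂ + B s₂ := by
  set F : ℝ → ℝ := fun s =>
      (c₁ + c₂ * s + c₃ * s ^ 2) * (x' s) ^ 2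
        - (c₂ + 2 * c₃ * s) * x s * x' s + b₁ s * x' s + c₃ * (x s) ^ 2
        + 2 * ω s * (c₁ + c₂ * s + c₃ * s ^ 2) * x s - b₁' s * x s + B s with hF
  have key : ∀ s, HasDerivAt F 0 s := by
    intro s
    have hK : HasDerivAt (fun s : ℝ => c₁ + c₂ * s + c₃ * s ^ 2) (c₂ + 2 * c₃ * s) s := by
      have := (((hasDerivAt_id s).const_mul c₂).const_add c₁).add
        ((hasDerivAt_pow 2 s).const_mul c₃)
      exact this.congr_deriv (by norm_num; ring)
    have hK' : HasDerivAt (fun s : ℝ => c₂ + 2 * c₃ * s) (2 * c₃) s := by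
      have := ((hasDerivAt_id s).const_mul (2 * c₃)).const_add c₂
      exact this.congr_deriv (by ring)
    -- build derivative directly
    have hd : HasDerivAt F
        ((c₂ + 2 * c₃ * s) * (x' s) ^ 2 + (c₁ + c₂ * s + c₃ * s ^ 2) * (2 * x' s * x'' s)
          - ((2 * c₃) * x s * x' s + (c₂ + 2 * c₃ * s) * (x' s * x' s + x s * x'' s))
          + (b₁' s * x' s + b₁ s * x'' s)
          + c₃ * (2 * x s * x' s)
          + ((2 * ω' s * (c₁ + c₂ * s + c₃ * s ^ 2) + 2 * ω s * (c₂ + 2 * c₃ * s)) * x s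
              + 2 * ω s * (c₁ + c₂ * s + c₃ * s ^ 2) * x' s)
          - (b₁'' s * x s + b₁' s * x' s)
          + b₁ s * ω s) s := by
      apply HasDerivAt.add
      apply HasDerivAt.sub
      apply HasDerivAt.add
      apply HasDerivAt.add
      apply HasDerivAt.add
      apply HasDerivAt.sub
      · have := hK.mul ((hx' s).pow 2)
        exact this.congr_deriv (by norm_num)
      · have h1 : HasDerivAt (fun t => (c₂ + 2 * c₃ * t) * x t) (2 * c₃ * x s + (c₂ + 2 * c₃ * s) * x' s) s := hK'.mul (hx s)
        have := h1.mul (hx' s)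
        exact this.congr_deriv (by ring)
      · exact (hb₁ s).mul (hx' s)
      · have := ((hx s).pow 2).const_mul c₃
        simpa [mul_comm, mul_assoc] using this
      · have hωK : HasDerivAt (fun t => 2 * ω t * (c₁ + c₂ * t + c₃ * t ^ 2))
            (2 * ω' s * (c₁ + c₂ * s + c₃ * s ^ 2) + 2 * ω s * (c₂ + 2 * c₃ * s)) s := by
          have := ((hω s).const_mul 2).mul hK
          exact this.congr_deriv (by ring)
        exact hωK.mul (hx s)
      · exact (hb₁' s).mul (hx s)
      · exact hB s
    have hz : ((c₂ + 2 * c₃ * s) * (x' s) ^ 2 + (c₁ + c₂ * s + c₃ * s ^ 2) * (2 * x' s * x'' s)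
          - ((2 * c₃) * x s * x' s + (c₂ + 2 * c₃ * s) * (x' s * x' s + x s * x'' s))
          + (b₁' s * x' s + b₁ s * x'' s)
          + c₃ * (2 * x s * x' s)
          + ((2 * ω' s * (c₁ + c₂ * s + c₃ * s ^ 2) + 2 * ω s * (c₂ + 2 * c₃ * s)) * x s
              + 2 * ω s * (c₁ + c₂ * s + c₃ * s ^ 2) * x' s)
          - (b₁'' s * x s + b₁' s * x' s)
          + b₁ s * ω s) = 0 := by
      rw [heom, hcomp]; ring
    exact hz ▸ hd
  intro s₁ s₂
  have : F s₁ = F s₂ := by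
    have hc := is_const_of_deriv_eq_zero (f := F)
      (fun s => (key s).differentiableAt) (fun s => (key s).deriv) s₁ s₂
    exact hc
  simpa [hF] using this
end
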